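/- arXiv:2408.09473 — 9 statements merged into one kernel-verified Lean document; each statement's English description precedes it below -/
import Mathlib

section
/- Let P be continuous and strictly differentiable-decreasing on (0, q̄) (i.e., for 0 < q' < q ≤ q̄, P(q') > P(q)), V(q) = ∫₀^q P(z) dz, and let q̂ ∈ (0, q̄) satisfy V(q̂) - q̂·P(q̂) = c where c > 0. Define Ṽ(q) = (V(q) - c)·1_{q>0}. Then the function co(Ṽ) defined by co(Ṽ)(q) = q·P(q̂) for 0 ≤ q < q̂ and co(Ṽ)(q) = V(q) - c for q ≥ q̂ is concave on [0, q̄], and co(Ṽ)(q) ≥ Ṽ(q) for all q ∈ [0, q̄]. -/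
open Set Filter MeasureTheory

noncomputable def V (P : ℝ → ℝ) (q : ℝ) : ℝ := ∫ z in (0:ℝ)..q, P z

theorem stmt1 (P : ℝ → ℝ) (qbar c qhat : ℝ) (hqbar : 0 < qbar) (hc : 0 < c)
    (hPcont : ContinuousOn P (Icc 0 qbar))
    (hPanti : ∀ q q' : ℝ, 0 < q' → q' < q → q ≤ qbar → P q' > P q)
    (hqhat : qhat ∈ Ioo 0 qbar)
    (hqhat_eq : V P qhat - qhat * P qhat = c) :
    ConcaveOn ℝ (Icc 0 qbar)
      (fun q => if q < qhat then q * P qhat else V P q - c) ∧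
    ∀ q ∈ Icc 0 qbar,
      (if q < qhat then q * P qhat else V P q - c) ≥
        (if 0 < q then V P q - c else 0) := by
  obtain ⟨hq0, hqq⟩ := hqhat
  set K : ℝ := P qhat with hK
  set f : ℝ → ℝ := fun q => if q < qhat then q * K else V P q - c with hf
  -- FTC derivative of V
  have hVd : ∀ q ∈ Ioo (0:ℝ) qbar, HasDerivAt (V P) (P q) q := by
    intro q hq
    have hmem : Icc (0:ℝ) qbar ∈ nhds q := Icc_mem_nhds hq.1 hq.2
    have hca : ContinuousAt P q := hPcont.continuousAt hmem
    have hint : IntervalIntegrable P volume 0 q := by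
      refine (hPcont.mono ?_).intervalIntegrable
      exact uIcc_subset_Icc ⟨le_refl 0, hqbar.le⟩ ⟨hq.1.le, hq.2.le⟩
    have hmeas : StronglyMeasurableAtFilter P (nhds q) volume :=
      ContinuousOn.stronglyMeasurableAtFilter isOpen_Ioo
        (hPcont.mono Ioo_subset_Icc_self) q hq
    exact intervalIntegral.integral_hasDerivAt_right hint hmeas hca
  -- derivative of f on the interior
  set g : ℝ → ℝ := fun q => if q < qhat then K else P q with hg
  have hfd : ∀ q ∈ Ioo (0:ℝ) qbar, HasDerivAt f (g q) q := by
    intro q hq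
    rcases lt_trichotomy q qhat with h | h | h
    · have : g q = K := if_pos h
      rw [this]
      refine (hasDerivAt_mul_const K).congr_of_eventuallyEq ?_
      filter_upwards [Iio_mem_nhds h] with y hy
      exact if_pos hy
    · subst h
      have hgq : g q = K := by simp [hg, hK]
      rw [hgq]
      have h1 : HasDerivWithinAt f K (Iic q) q := by
        refine ((hasDerivAt_mul_const K).hasDerivWithinAt).congr ?_ ?_
        · intro y hy
          rcases lt_or_eq_of_le (mem_Iic.mp hy) with h' | h'
          · simp [hf, if_pos h']
          · subst h'; simp [hf, hK]; linarith [hqhat_eq]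
        · simp [hf, hK]; linarith [hqhat_eq]
      have h2 : HasDerivWithinAt f K (Ici q) q := by
        have hd : HasDerivAt (fun y => V P y - c) (P q) q := (hVd q hq).sub_const c
        refine hd.hasDerivWithinAt.congr ?_ ?_
        · intro y hy
          simp [hf, not_lt.mpr (mem_Ici.mp hy)]
        · simp [hf]
      have := h1.union h2
      rwa [Iic_union_Ici, hasDerivWithinAt_univ] at this
    · have : g q = P q := if_neg (not_lt.mpr h.le)
      rw [this]
      have hd : HasDerivAt (fun y => V P y - c) (P q) q := (hVd q hq).sub_const c
      refine hd.congr_of_eventuallyEq ?_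
      filter_upwards [Ioi_mem_nhds h] with y hy
      simp [hf, not_lt.mpr (le_of_lt (mem_Ioi.mp hy))]
  -- continuity of V and f
  have hVc : ContinuousOn (V P) (Icc 0 qbar) := by
    have h_int : IntegrableOn P (uIcc 0 qbar) volume := by
      rw [uIcc_of_le hqbar.le]
      exact hPcont.integrableOn_Icc
    have := intervalIntegral.continuousOn_primitive_interval (f := P) (μ := volume)
      (a := 0) (b := qbar) h_int
    rwa [uIcc_of_le hqbar.le] at this
  have hfqhat : f qhat = qhat * K := by
    simp only [hf, if_neg (lt_irrefl qhat)]
    linarith [hqhat_eq]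
  have hfc : ContinuousOn f (Icc 0 qbar) := by
    intro x hx
    rcases lt_trichotomy x qhat with h | h | h
    · refine ContinuousWithinAt.congr_of_eventuallyEq
        (((continuous_id.mul continuous_const).continuousWithinAt)) ?_ (if_pos h)
      filter_upwards [mem_nhdsWithin_of_mem_nhds (Iio_mem_nhds h)] with y hy
      exact if_pos hy
    · subst h
      have h1 : ContinuousWithinAt f (Icc 0 qbar ∩ Iic x) x := by
        refine ContinuousWithinAt.congr
          ((continuous_id.mul continuous_const).continuousWithinAt) ?_ hfqhat
        intro y hy
        rcases lt_or_eq_of_le (mem_Iic.mp hy.2) with h' | h'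
        · exact if_pos h'
        · subst h'; exact hfqhat
      have h2 : ContinuousWithinAt f (Icc 0 qbar ∩ Ici x) x := by
        refine ContinuousWithinAt.congr (f := fun y => V P y - c) (g := f)
          (((hVc x hx).sub (continuousWithinAt_const (b := c))).mono inter_subset_left) ?_ ?_
        · intro y hy
          exact if_neg (not_lt.mpr (mem_Ici.mp hy.2))
        · exact if_neg (lt_irrefl x)
      have := h1.union h2
      rwa [← inter_union_distrib_left, Iic_union_Ici, inter_univ] at this
    · refine ContinuousWithinAt.congr_of_eventuallyEq
        (((hVc x hx).sub continuousWithinAt_const)) ?_ (if_neg (not_lt.mpr h.le)) 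
      filter_upwards [mem_nhdsWithin_of_mem_nhds (Ioi_mem_nhds h)] with y hy
      exact if_neg (not_lt.mpr (le_of_lt hy))
  -- concavity
  have hconc : ConcaveOn ℝ (Icc 0 qbar) f := by
    refine AntitoneOn.concaveOn_of_deriv (convex_Icc 0 qbar) hfc ?_ ?_
    · rw [interior_Icc]
      intro x hx
      exact (hfd x hx).differentiableAt.differentiableWithinAt
    · rw [interior_Icc]
      intro a ha b hb hab
      rw [(hfd a ha).deriv, (hfd b hb).deriv]
      simp only [hg]
      rcases lt_or_ge a qhat with h1 | h1
      · rw [if_pos h1]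
        rcases lt_or_ge b qhat with h2 | h2
        · rw [if_pos h2]
        · rw [if_neg (not_lt.mpr h2)]
          rcases eq_or_lt_of_le h2 with h3 | h3
          · rw [← h3]
          · exact le_of_lt (hPanti b qhat hq0 h3 hb.2.le)
      · rw [if_neg (not_lt.mpr h1), if_neg (not_lt.mpr (h1.trans hab))]
        rcases eq_or_lt_of_le hab with h3 | h3
        · rw [h3]
        · exact le_of_lt (hPanti b a (hq0.trans_le h1) h3 hb.2.le)
  refine ⟨hconc, ?_⟩
  -- majorization
  intro q hq
  rcases lt_or_ge q qhat with h | h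
  · rw [if_pos h]
    rcases eq_or_lt_of_le hq.1 with h0 | h0
    · rw [← h0]
      simp
    · rw [if_pos h0]
      -- show V P q - c ≤ q * K using monotonicity of W = V - ·*K on [0, qhat]
      have hW : StrictMonoOn (fun x => V P x - x * K) (Icc 0 qhat) := by
        refine strictMonoOn_of_deriv_pos (convex_Icc 0 qhat) ?_ ?_
        · exact (hVc.mono (Icc_subset_Icc le_rfl hqq.le)).sub
            (continuousOn_id.mul continuousOn_const)
        · rw [interior_Icc]
          intro x hx
          have hd : HasDerivAt (fun x => V P x - x * K) (P x - K) x :=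
            (hVd x ⟨hx.1, hx.2.trans hqq⟩).sub (hasDerivAt_mul_const K)
          rw [hd.deriv]
          have := hPanti qhat x hx.1 hx.2 hqq.le
          rw [hK]; linarith
      have := hW (mem_Icc.mpr ⟨h0.le, h.le⟩) (mem_Icc.mpr ⟨hq0.le, le_rfl⟩) h
      simp only at this
      have hc' : V P qhat - qhat * K = c := hqhat_eq
      linarith
  · rw [if_neg (not_lt.mpr h), if_pos (hq0.trans_le h)]
end

section
/- Let P be continuous and strictly decreasing with P(q̄) = 0, V(q) = ∫₀^q P(z) dz, c > 0, and q̂ the quantity floor (V(q̂) - q̂ P(q̂) = c). For any q ∈ (0, q̂) we have (q/q̂)·(V(q̂) - c) ≥ V(q) - c, with strict inequality if q ≠ q̂. That is, operating with probability q/q̂ at quantity q̂ yields weakly higher expected consumer value net of fixed cost than operating with probability one at quantity q < q̂. -/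
open Set Filter MeasureTheory

theorem stmt2 (P : ℝ → ℝ) (qbar c qhat : ℝ) (hqbar : 0 < qbar) (hc : 0 < c)
    (hPcont : ContinuousOn P (Icc 0 qbar))
    (hPanti : StrictAntiOn P (Icc 0 qbar))
    (hPqbar : P qbar = 0)
    (hA2 : V P qbar - qbar * P qbar > c)
    (hqhat : qhat ∈ Ioo 0 qbar)
    (hqhat_eq : V P qhat - qhat * P qhat = c) :
    ∀ q ∈ Ioo 0 qhat,
      (q / qhat) * (V P qhat - c) ≥ V P q - c ∧
      (q ≠ qhat → (q / qhat) * (V P qhat - c) > V P q - c) := by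
  intro q hq
  obtain ⟨hq0, hqlt⟩ := hq
  obtain ⟨hqhat0, hqhatbar⟩ := hqhat
  have hInt : ∀ a b : ℝ, a ∈ Icc (0:ℝ) qbar → b ∈ Icc (0:ℝ) qbar →
      IntervalIntegrable P volume a b := by
    intro a b ha hb
    exact (hPcont.mono (uIcc_subset_Icc ha hb)).intervalIntegrable
  have hqmem : q ∈ Icc (0:ℝ) qbar := ⟨le_of_lt hq0, le_of_lt (hqlt.trans hqhatbar)⟩
  have hqhmem : qhat ∈ Icc (0:ℝ) qbar := ⟨le_of_lt hqhat0, le_of_lt hqhatbar⟩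
  have h0mem : (0:ℝ) ∈ Icc (0:ℝ) qbar := ⟨le_refl 0, le_of_lt hqbar⟩
  -- positivity of ∫ q..qhat (P z - P qhat)
  have hpos : 0 < ∫ z in q..qhat, (P z - P qhat) := by
    apply intervalIntegral.intervalIntegral_pos_of_pos_on
    · exact (hInt q qhat hqmem hqhmem).sub intervalIntegrable_const
    · intro x hx
      have hxmem : x ∈ Icc (0:ℝ) qbar :=
        ⟨le_of_lt (hq0.trans hx.1), le_of_lt (hx.2.trans hqhatbar)⟩
      have := hPanti hxmem hqhmem hx.2
      linarith
    · exact hqlt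
  have hsplit : V P q + ∫ z in q..qhat, P z = V P qhat := by
    exact intervalIntegral.integral_add_adjacent_intervals
      (hInt 0 q h0mem hqmem) (hInt q qhat hqmem hqhmem)
  have hsub : (∫ z in q..qhat, (P z - P qhat))
      = (∫ z in q..qhat, P z) - (qhat - q) * P qhat := by
    rw [intervalIntegral.integral_sub (hInt q qhat hqmem hqhmem) intervalIntegrable_const,
      intervalIntegral.integral_const, smul_eq_mul]
  have hkey : V P qhat - V P q > (qhat - q) * P qhat := by
    rw [hsub] at hpos; linarith
  have hVc : V P qhat - c = qhat * P qhat := by linarith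
  have hdiv : (q / qhat) * (V P qhat - c) = q * P qhat := by
    rw [hVc]; field_simp
  have hstrict : (q / qhat) * (V P qhat - c) > V P q - c := by
    rw [hdiv]; nlinarith
  exact ⟨le_of_lt hstrict, fun _ => hstrict⟩
end

section
/- Suppose Δ : [0, q̄] → ℝ is defined by Δ(q) = V(q) - q·P(q) - c where P is continuous and strictly decreasing with P(q̄) = 0, V(q) = ∫₀^q P(z) dz, and suppose V(P⁻¹(θ̄)) - c - θ̄·P⁻¹(θ̄) > 0 (assumption A2). Let q̂ be the unique root of Δ and q_e(θ) = P⁻¹(θ) for θ ∈ [θ̲, θ̄]. Then q_e(θ) > q̂ for all θ ∈ [θ̲, θ̄], and V(q̂) - c - θ·q̂ > 0 for all θ ∈ [θ̲, θ̄]. -/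
open Set Filter MeasureTheory

theorem stmt4 (θl θh qbar c : ℝ) (P qe : ℝ → ℝ) (qhat : ℝ)
    (h0 : 0 < θl) (hlt : θl < θh) (hqbar : 0 < qbar) (hc : 0 < c)
    (hPcont : ContinuousOn P (Icc 0 qbar))
    (hPanti : StrictAntiOn P (Icc 0 qbar))
    (hPqbar : P qbar = 0)
    (hqe : ∀ θ ∈ Icc θl θh, qe θ ∈ Icc 0 qbar ∧ P (qe θ) = θ)
    (hA2 : V P (qe θh) - c - θh * qe θh > 0)
    (hqhat_mem : qhat ∈ Ioo 0 qbar)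
    (hqhat_eq : V P qhat - qhat * P qhat = c) :
    ∀ θ ∈ Icc θl θh, qe θ > qhat ∧ V P qhat - c - θ * qhat > 0 := by
  -- integrability helper
  have hint : ∀ a b : ℝ, a ∈ Icc 0 qbar → b ∈ Icc 0 qbar →
      IntervalIntegrable P volume a b := by
    intro a b ha hb
    refine (hPcont.mono ?_).intervalIntegrable
    exact uIcc_subset_Icc ha hb
  have hint' : ∀ (t : ℝ) (a b : ℝ), a ∈ Icc 0 qbar → b ∈ Icc 0 qbar →
      IntervalIntegrable (fun z => P z - t) volume a b := by
    intro t a b ha hb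
    exact (hint a b ha hb).sub intervalIntegrable_const
  have hV : ∀ a b : ℝ, a ∈ Icc 0 qbar → b ∈ Icc 0 qbar →
      V P b - V P a = ∫ z in a..b, P z := by
    intro a b ha hb
    have h0m : (0:ℝ) ∈ Icc 0 qbar := by simp [hqbar.le]
    unfold V
    exact intervalIntegral.integral_interval_sub_left (hint 0 b h0m hb)
      (hint 0 a h0m ha)
  -- key monotonicity: Δ strictly increasing
  have hmono : ∀ a b : ℝ, a ∈ Icc 0 qbar → b ∈ Icc 0 qbar → a < b →
      V P a - a * P a < V P b - b * P b := by
    intro a b ha hb hab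
    have h1 : V P b - V P a = ∫ z in a..b, P z := hV a b ha hb
    have h2 : (∫ z in a..b, (P z - P b)) = (∫ z in a..b, P z) - (b - a) * P b := by
      rw [intervalIntegral.integral_sub (hint a b ha hb) intervalIntegrable_const,
        intervalIntegral.integral_const, smul_eq_mul]
    have h3 : 0 < ∫ z in a..b, (P z - P b) := by
      apply intervalIntegral.intervalIntegral_pos_of_pos_on (hint' (P b) a b ha hb) _ hab
      intro x hx
      have hxm : x ∈ Icc 0 qbar := ⟨le_trans ha.1 hx.1.le, le_trans hx.2.le hb.2⟩
      have := hPanti hxm hb hx.2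
      linarith
    have h4 : a * P a - a * P b ≥ 0 := by
      have hPab : P b ≤ P a := (hPanti ha hb hab).le
      nlinarith [ha.1]
    nlinarith
  intro θ hθ
  obtain ⟨hqm, hPq⟩ := hqe θ hθ
  obtain ⟨hqhm, hPqh⟩ := hqe θh ⟨hlt.le, le_rfl⟩
  have hθpos : 0 < θ := lt_of_lt_of_le h0 hθ.1
  have hθh : θ ≤ θh := hθ.2
  set q := qe θ
  set qh := qe θh
  -- qh ≤ q
  have hqhq : qh ≤ q := by
    by_contra h
    push_neg at h
    have := hPanti hqm hqhm h
    rw [hPq, hPqh] at this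
    linarith
  -- Δ(q) = V q - θ q - c > 0
  have hDq : 0 < V P q - θ * q - c := by
    have hI : 0 ≤ ∫ z in qh..q, (P z - θ) := by
      apply intervalIntegral.integral_nonneg hqhq
      intro z hz
      have hzm : z ∈ Icc 0 qbar := ⟨le_trans hqhm.1 hz.1, le_trans hz.2 hqm.2⟩
      have : P q ≤ P z := by
        rcases eq_or_lt_of_le hz.2 with h | h
        · rw [h]
        · exact (hPanti hzm hqm h).le
      rw [hPq] at this
      linarith
    have h2 : (∫ z in qh..q, (P z - θ)) = (∫ z in qh..q, P z) - (q - qh) * θ := by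
      rw [intervalIntegral.integral_sub (hint qh q hqhm hqm) intervalIntegrable_const,
        intervalIntegral.integral_const, smul_eq_mul]
    have h1 : V P q - V P qh = ∫ z in qh..q, P z := hV qh q hqhm hqm
    have h5 : 0 ≤ qh * (θh - θ) := mul_nonneg hqhm.1 (by linarith)
    nlinarith
  have hqhat01 : qhat ∈ Icc 0 qbar := Icc_subset_Icc_right le_rfl (Ioo_subset_Icc_self hqhat_mem)
  -- first claim
  have hmain : q > qhat := by
    by_contra h
    push_neg at h
    rcases eq_or_lt_of_le h with h | h
    · rw [← h] at hqhat_eq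
      rw [hPq] at hqhat_eq
      nlinarith
    · have := hmono q qhat hqm hqhat01 h
      rw [hPq] at this
      nlinarith
  refine ⟨hmain, ?_⟩
  have hPgt : θ < P qhat := by
    have := hPanti hqhat01 hqm hmain
    rw [hPq] at this
    exact this
  nlinarith [hqhat_mem.1]
end

section
/- If P is twice continuously differentiable (in addition to being continuous and strictly decreasing with P(q̄) = 0 and satisfying A2), then the efficient mechanism M_e = (q_e, u_e) — where every type operates with probability 1, produces q_e(θ) = P⁻¹(θ), and u_e(θ) = ∫_θ^θ̄ q_e(y)dy — is dominated: there exists an IC and IR mechanism M̃ with RS_α(θ, M̃) ≥ RS_α(θ, M_e) for all θ and strict inequality for some θ. -/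
open Set Filter MeasureTheory

/-- Incentive compatibility: `q·r` decreasing plus the envelope formula. -/
def IC (θl θh : ℝ) (r q u : ℝ → ℝ) : Prop :=
  AntitoneOn (fun θ => q θ * r θ) (Set.Icc θl θh) ∧
  ∀ θ ∈ Set.Icc θl θh, u θ = u θh + ∫ z in θ..θh, q z * r z

/-- Individual rationality. -/
def IR (θh : ℝ) (u : ℝ → ℝ) : Prop := 0 ≤ u θh

/-- Feasibility of the operation and quantity rules. -/
def Valid (θl θh qbar : ℝ) (r q : ℝ → ℝ) : Prop :=
  (∀ θ ∈ Set.Icc θl θh, r θ ∈ Set.Icc (0:ℝ) 1) ∧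
  ∀ θ ∈ Set.Icc θl θh, q θ ∈ Set.Icc (0:ℝ) qbar

/-- Regulator's surplus at type θ with welfare weight α. -/
noncomputable def RS (P : ℝ → ℝ) (c α : ℝ) (r q u : ℝ → ℝ) (θ : ℝ) : ℝ :=
  r θ * (V P (q θ) - c - θ * q θ) - (1 - α) * u θ

/-- Floor-randomized mechanism with quantity floor `qhat`. -/
def FloorRandomized (θl θh qhat : ℝ) (r q u : ℝ → ℝ) : Prop :=
  IC θl θh r q u ∧ IR θh u ∧ u θh = 0 ∧
  ∃ T1 T01 T0 : Set ℝ,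
    T1 ∪ T01 ∪ T0 = Set.Icc θl θh ∧
    (∀ x ∈ T01, ∀ y ∈ T1, y < x) ∧
    (∀ x ∈ T0, ∀ y ∈ T01, y < x) ∧
    (∀ x ∈ T0, ∀ y ∈ T1, y < x) ∧
    T1.OrdConnected ∧ T01.OrdConnected ∧ T0.OrdConnected ∧
    (∀ θ ∈ T1, qhat ≤ q θ ∧ r θ = 1) ∧
    (∀ θ ∈ T01, q θ = qhat ∧ r θ ∈ Set.Ioo (0:ℝ) 1) ∧
    (∀ θ ∈ T0, q θ = 0 ∧ r θ = 0)

/-- Quantity rule of the floor-randomized transformation of an effective quantity `qt`. -/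
noncomputable def qT (qhat : ℝ) (qt : ℝ → ℝ) (θ : ℝ) : ℝ :=
  if 0 < qt θ then max (qt θ) qhat else 0

/-- Operation rule of the floor-randomized transformation. -/
noncomputable def rT (qhat : ℝ) (qt : ℝ → ℝ) (θ : ℝ) : ℝ :=
  if 0 < qt θ then min (qt θ / qhat) 1 else 0

/-- Rent of the floor-randomized transformation. -/
noncomputable def uT (θh : ℝ) (qt : ℝ → ℝ) (θ : ℝ) : ℝ := ∫ z in θ..θh, qt z

/-- Mechanism `(r', q', u')` dominates `(r, q, u)`. -/
def Dominates (θl θh : ℝ) (P : ℝ → ℝ) (c α : ℝ) (r' q' u' r q u : ℝ → ℝ) : Prop :=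
  (∀ θ ∈ Set.Icc θl θh, RS P c α r q u θ ≤ RS P c α r' q' u' θ) ∧
  ∃ θ ∈ Set.Icc θl θh, RS P c α r q u θ < RS P c α r' q' u' θ

/-- Undominated IC and IR mechanism. -/
def Undominated (θl θh qbar : ℝ) (P : ℝ → ℝ) (c α : ℝ) (r q u : ℝ → ℝ) : Prop :=
  Valid θl θh qbar r q ∧ IC θl θh r q u ∧ IR θh u ∧
  ¬ ∃ r' q' u', Valid θl θh qbar r' q' ∧ IC θl θh r' q' u' ∧ IR θh u' ∧
      Dominates θl θh P c α r' q' u' r q u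

/-- Left-continuity of the effective quantity `q·r`. -/
def LeftCont (θl θh : ℝ) (r q : ℝ → ℝ) : Prop :=
  ∀ θ ∈ Set.Ioc θl θh,
    Filter.Tendsto (fun z => q z * r z) (nhdsWithin θ (Set.Iio θ)) (nhds (q θ * r θ))

/-- Downward distortion with respect to the efficient quantity rule `qe`. -/
def DD (θl θh : ℝ) (qe q : ℝ → ℝ) : Prop :=
  (∀ θ ∈ Set.Icc θl θh, q θ ≤ qe θ) ∧ q θl = qe θl

set_option maxHeartbeats 1000000 in
theorem stmt11 (θl θh qbar c α : ℝ) (P qe : ℝ → ℝ)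
    (h0 : 0 < θl) (hlt : θl < θh) (hqbar : 0 < qbar) (hc : 0 < c)
    (hα0 : 0 ≤ α) (hα1 : α < 1)
    (hPcont : ContinuousOn P (Icc 0 qbar))
    (hPanti : StrictAntiOn P (Icc 0 qbar))
    (hPqbar : P qbar = 0)
    (hPC2 : ContDiffOn ℝ 2 P (Icc 0 qbar))
    (hqe : ∀ θ ∈ Icc θl θh, qe θ ∈ Icc 0 qbar ∧ P (qe θ) = θ)
    (hA2 : V P (qe θh) - c - θh * qe θh > 0) :
    ∃ r' q' u' : ℝ → ℝ,
      Valid θl θh qbar r' q' ∧ IC θl θh r' q' u' ∧ IR θh u' ∧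
      Dominates θl θh P c α r' q' u'
        (fun _ => 1) qe (fun θ => ∫ y in θ..θh, qe y) := by
  -- A Lipschitz constant `K ≥ 1` for `P` on `[0, qbar]`.
  obtain ⟨K, hK1, hKlip⟩ :
      ∃ K : ℝ, 1 ≤ K ∧ ∀ x ∈ Icc (0:ℝ) qbar, ∀ y ∈ Icc (0:ℝ) qbar,
        |P x - P y| ≤ K * |x - y| := by
    have hud : UniqueDiffOn ℝ (Icc (0:ℝ) qbar) := uniqueDiffOn_Icc hqbar
    have hdiff : DifferentiableOn ℝ P (Icc (0:ℝ) qbar) :=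
      hPC2.differentiableOn (by norm_num)
    have hcd : ContinuousOn (derivWithin P (Icc (0:ℝ) qbar)) (Icc (0:ℝ) qbar) :=
      hPC2.continuousOn_derivWithin hud (by norm_num)
    obtain ⟨M, hM⟩ := isCompact_Icc.exists_bound_of_continuousOn hcd
    set K : ℝ := max M 0 + 1 with hKdef
    have hK1 : (1:ℝ) ≤ K := by
      rw [hKdef]; linarith [le_max_right M (0:ℝ)]
    have hlip : LipschitzOnWith (Real.toNNReal K) P (Icc (0:ℝ) qbar) := by
      apply Convex.lipschitzOnWith_of_nnnorm_derivWithin_le (convex_Icc (0:ℝ) qbar) hdiff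
      intro x hx
      have h1 : ‖derivWithin P (Icc (0:ℝ) qbar) x‖ ≤ K := by
        have h3 := hM x hx
        have h2 : M ≤ max M 0 := le_max_left _ _
        rw [hKdef]; linarith
      rw [← NNReal.coe_le_coe, coe_nnnorm,
        Real.coe_toNNReal K (by linarith : (0:ℝ) ≤ K)]
      exact h1
    refine ⟨K, hK1, fun x hx y hy => ?_⟩
    have := hlip.dist_le_mul x hx y hy
    rw [Real.dist_eq, Real.dist_eq] at this
    have hcoe : ((Real.toNNReal K : NNReal) : ℝ) = K :=
      Real.coe_toNNReal K (by linarith : (0:ℝ) ≤ K)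
    rw [hcoe] at this
    exact this
  have hKpos : (0:ℝ) < K := by linarith
  have hmemh : θh ∈ Icc θl θh := ⟨le_of_lt hlt, le_rfl⟩
  have hd : 0 < θh - θl := by linarith
  -- `qe` is antitone and reverse-Lipschitz.
  have hqe_anti : ∀ x ∈ Icc θl θh, ∀ y ∈ Icc θl θh, x ≤ y → qe y ≤ qe x := by
    intro x hx y hy hxy
    by_contra h
    push_neg at h
    have h2 := hPanti (hqe x hx).1 (hqe y hy).1 h
    rw [(hqe x hx).2, (hqe y hy).2] at h2
    linarith
  have hqe_lip : ∀ x ∈ Icc θl θh, ∀ y ∈ Icc θl θh, x ≤ y →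
      y - x ≤ K * (qe x - qe y) := by
    intro x hx y hy hxy
    have h1 := hKlip (qe x) (hqe x hx).1 (qe y) (hqe y hy).1
    rw [(hqe x hx).2, (hqe y hy).2] at h1
    have h2 : qe y ≤ qe x := hqe_anti x hx y hy hxy
    rw [abs_of_nonpos (by linarith), abs_of_nonneg (by linarith)] at h1
    linarith
  -- the top efficient quantity is positive
  have hk0 : 0 < qe θh := by
    rcases lt_or_eq_of_le (hqe θh hmemh).1.1 with h | h
    · exact h
    · exfalso
      rw [← h] at hA2
      simp only [V, intervalIntegral.integral_same, mul_zero] at hA2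
      linarith
  -- the perturbation size
  set κ : ℝ := min (min (1/K) (qe θh / (θh - θl))) ((1-α)/(4*K)) with hκdef
  have hKne : K ≠ 0 := ne_of_gt hKpos
  have hκpos : 0 < κ := by
    apply lt_min (lt_min _ _) _
    · exact div_pos one_pos hKpos
    · exact div_pos hk0 hd
    · apply div_pos (by linarith) (by linarith)
  have hκK : κ * K ≤ (1-α)/4 := by
    have h1 : κ ≤ (1-α)/(4*K) := min_le_right _ _
    have h2 : ((1-α)/(4*K)) * K = (1-α)/4 := by field_simp
    nlinarith
  have hκK1 : κ * K ≤ 1 := by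
    have h1 : κ ≤ 1/K := le_trans (min_le_left _ _) (min_le_left _ _)
    have h2 : (1/K) * K = 1 := by field_simp
    nlinarith
  have hκq : κ * (θh - θl) ≤ qe θh := by
    have h1 : κ ≤ qe θh / (θh - θl) := le_trans (min_le_left _ _) (min_le_right _ _)
    have h2 : (qe θh / (θh - θl)) * (θh - θl) = qe θh := by
      field_simp
    nlinarith
  -- the new mechanism
  set q' : ℝ → ℝ := fun θ => qe θ - κ * (θh - θ) with hq'def
  set u' : ℝ → ℝ := fun θ => ∫ z in θ..θh, q' z with hu'def
  have hq'anti : AntitoneOn q' (Icc θl θh) := by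
    intro x hx y hy hxy
    have h1 := hqe_lip x hx y hy hxy
    have h2 : κ * (y - x) * K ≤ (y - x) := by
      have : 0 ≤ y - x := by linarith
      nlinarith
    simp only [hq'def]
    nlinarith
  have hq'mem : ∀ θ ∈ Icc θl θh, q' θ ∈ Icc (0:ℝ) qbar := by
    intro θ hθ
    have h1 : qe θh ≤ qe θ := hqe_anti θ hθ θh hmemh hθ.2
    have h2 : κ * (θh - θ) ≤ κ * (θh - θl) := by nlinarith [hθ.1]
    have h3 : 0 ≤ κ * (θh - θ) := by nlinarith [hθ.2]
    constructor
    · simp only [hq'def]; nlinarith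
    · simp only [hq'def]
      have := (hqe θ hθ).1.2
      linarith
  have hqeanti' : AntitoneOn qe (Icc θl θh) := fun x hx y hy h => hqe_anti x hx y hy h
  have hint_qe : ∀ θ ∈ Icc θl θh, IntervalIntegrable qe volume θ θh := by
    intro θ hθ
    apply AntitoneOn.intervalIntegrable
    apply hqeanti'.mono
    rw [uIcc_of_le hθ.2]
    exact Icc_subset_Icc hθ.1 le_rfl
  have hint_q' : ∀ θ ∈ Icc θl θh, IntervalIntegrable q' volume θ θh := by
    intro θ hθ
    apply AntitoneOn.intervalIntegrable
    apply hq'anti.mono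
    rw [uIcc_of_le hθ.2]
    exact Icc_subset_Icc hθ.1 le_rfl
  -- rent difference
  have hU : ∀ θ ∈ Icc θl θh,
      (∫ y in θ..θh, qe y) - (∫ z in θ..θh, q' z) = κ * (θh - θ)^2 / 2 := by
    intro θ hθ
    rw [← intervalIntegral.integral_sub (hint_qe θ hθ) (hint_q' θ hθ)]
    have hcongr : (fun z => qe z - q' z) = fun z => κ * (θh - z) := by
      funext z; simp only [hq'def]; ring
    rw [hcongr, intervalIntegral.integral_const_mul]
    have hlin : (∫ z in θ..θh, (θh - z)) = (θh - θ)^2 / 2 := by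
      rw [intervalIntegral.integral_sub intervalIntegrable_const intervalIntegral.intervalIntegrable_id]
      simp only [intervalIntegral.integral_const, integral_id, smul_eq_mul]
      ring
    rw [hlin]; ring
  -- pointwise surplus comparison
  have key : ∀ θ ∈ Icc θl θh,
      RS P c α (fun _ => 1) qe (fun θ => ∫ y in θ..θh, qe y) θ
        + ((1-α) * (κ * (θh - θ)^2 / 2) - K * κ^2 * (θh - θ)^2)
      ≤ RS P c α (fun _ => 1) q' u' θ := by
    intro θ hθ
    have hPb : P (qe θ) = θ := (hqe θ hθ).2
    set e : ℝ := κ * (θh - θ) with hedef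
    have he0 : 0 ≤ e := by
      have := hθ.2; simp only [hedef]; nlinarith
    have hamem : q' θ ∈ Icc (0:ℝ) qbar := hq'mem θ hθ
    have hbmem : qe θ ∈ Icc (0:ℝ) qbar := (hqe θ hθ).1
    have hab : q' θ ≤ qe θ := by simp only [hq'def]; linarith
    have hba : qe θ - q' θ = e := by simp only [hq'def, hedef]; ring
    -- V difference as an integral
    have hintP : ∀ x ∈ Icc (0:ℝ) qbar, IntervalIntegrable P volume 0 x := by
      intro x hx
      apply ContinuousOn.intervalIntegrable
      apply hPcont.mono
      rw [uIcc_of_le hx.1]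
      exact Icc_subset_Icc le_rfl hx.2
    have hintP2 : IntervalIntegrable P volume (q' θ) (qe θ) := by
      apply ContinuousOn.intervalIntegrable
      apply hPcont.mono
      rw [uIcc_of_le hab]
      exact Icc_subset_Icc hamem.1 hbmem.2
    have hV : V P (qe θ) - V P (q' θ) = ∫ z in (q' θ)..(qe θ), P z := by
      simp only [V]
      rw [intervalIntegral.integral_interval_sub_left (hintP _ hbmem) (hintP _ hamem)]
    have hImax : (∫ z in (q' θ)..(qe θ), P z) ≤ (qe θ - q' θ) * P (q' θ) := by
      have hmono : ∀ x ∈ Icc (q' θ) (qe θ), P x ≤ P (q' θ) := by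
        intro x hx
        have hxmem : x ∈ Icc (0:ℝ) qbar := ⟨le_trans hamem.1 hx.1, le_trans hx.2 hbmem.2⟩
        rcases lt_or_eq_of_le hx.1 with h | h
        · exact le_of_lt (hPanti hamem hxmem h)
        · rw [← h]
      calc (∫ z in (q' θ)..(qe θ), P z)
          ≤ ∫ _z in (q' θ)..(qe θ), P (q' θ) :=
            intervalIntegral.integral_mono_on hab hintP2 intervalIntegrable_const hmono
        _ = (qe θ - q' θ) * P (q' θ) := by
            rw [intervalIntegral.integral_const, smul_eq_mul]
    have hPab : P (q' θ) - θ ≤ K * e := by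
      have h1 := hKlip (q' θ) hamem (qe θ) hbmem
      rw [hPb] at h1
      have h2 : |q' θ - qe θ| = e := by rw [abs_of_nonpos (by linarith)]; linarith
      rw [h2] at h1
      calc P (q' θ) - θ ≤ |P (q' θ) - θ| := le_abs_self _
        _ ≤ K * e := h1
    have hUθ := hU θ hθ
    simp only [RS, one_mul, hu'def]
    beta_reduce
    have hprod : e * (P (q' θ) - θ) ≤ e * (K * e) :=
      mul_le_mul_of_nonneg_left hPab he0
    have hImax' : (∫ z in (q' θ)..(qe θ), P z) ≤ e * P (q' θ) := by
      rw [hba] at hImax; exact hImax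
    have hθe : θ * qe θ - θ * q' θ = θ * e := by
      simp only [hq'def, hedef]; ring
    have hKesq : K * e^2 = K * (κ^2 * (θh - θ)^2) := by
      simp only [hedef]; ring
    have hprod' : e * P (q' θ) - θ * e ≤ K * e^2 := by nlinarith [hprod]
    have hUθ' : (1-α) * ((∫ y in θ..θh, qe y) - (∫ z in θ..θh, q' z))
        = (1-α) * (κ * (θh - θ)^2 / 2) := by rw [hUθ]
    have hgoal : V P (qe θ) - V P (q' θ) - (θ * qe θ - θ * q' θ)
        ≤ K * (κ^2 * (θh - θ)^2) := by
      linarith [hV, hImax', hθe, hprod', hKesq]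
    clear_value κ q' u' e
    linarith [hgoal, hUθ']
  have hgain_nonneg : ∀ θ ∈ Icc θl θh,
      0 ≤ (1-α) * (κ * (θh - θ)^2 / 2) - K * κ^2 * (θh - θ)^2 := by
    intro θ hθ
    have hs : 0 ≤ (θh - θ)^2 := sq_nonneg _
    have h1 : (κ * K) * (κ * (θh - θ)^2) ≤ ((1-α)/4) * (κ * (θh - θ)^2) :=
      mul_le_mul_of_nonneg_right hκK (by positivity)
    have h4 : 0 ≤ (1-α) * (κ * (θh - θ)^2) :=
      mul_nonneg (by linarith) (by positivity)
    nlinarith [h1, h4]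
  refine ⟨(fun _ => 1), q', u', ⟨fun θ _ => ⟨zero_le_one, le_rfl⟩, hq'mem⟩, ?_, ?_, ?_, ?_⟩
  · -- IC
    constructor
    · simp only [mul_one]
      exact hq'anti
    · intro θ hθ
      simp only [hu'def, mul_one, intervalIntegral.integral_same, zero_add]
  · -- IR
    simp only [IR, hu'def, intervalIntegral.integral_same]
    exact le_rfl
  · -- weak dominance everywhere
    intro θ hθ
    have h1 := key θ hθ
    have h2 := hgain_nonneg θ hθ
    linarith
  · -- strict dominance at θl
    refine ⟨θl, ⟨le_rfl, le_of_lt hlt⟩, ?_⟩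
    have h1 := key θl ⟨le_rfl, le_of_lt hlt⟩
    have hs : 0 < (θh - θl)^2 := by positivity
    have h2 : (κ * K) * (κ * (θh - θl)^2) ≤ ((1-α)/4) * (κ * (θh - θl)^2) :=
      mul_le_mul_of_nonneg_right hκK (by positivity)
    have h3 : 0 < (1-α) * (κ * (θh - θl)^2) := by
      apply mul_pos (by linarith)
      positivity
    have hX : 0 < (1-α) * (κ * (θh - θl)^2 / 2) - K * κ^2 * (θh - θl)^2 := by
      nlinarith
    linarith
end

section
/- Let M = (r, q, u) be a floor-randomized mechanism satisfying downward distortion (q(θ) ≤ P⁻¹(θ) for all θ). Then the pointwise regulator surplus θ ↦ RS_α(θ, M) = r(θ)(V(q(θ)) - c - θq(θ)) - (1-α)u(θ) is a decreasing and non-negative function of θ. Consequently, for priors G, G' on Θ with G' first-order stochastically dominating G, the expected regulator surplus satisfies ∫ RS_α(θ, M) dG(θ) ≥ ∫ RS_α(θ, M) dG'(θ). -/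
open Set Filter MeasureTheory Topology

lemma riemann_aux {a b : ℝ} {g m : ℝ → ℝ} (hab : a ≤ b)
    (hm_int : IntervalIntegrable m MeasureTheory.volume a b)
    (hm_anti : AntitoneOn m (Icc a b))
    (hkey : ∀ x ∈ Icc a b, ∀ y ∈ Icc a b, x ≤ y → (y - x) * m y ≤ g x - g y) :
    ∫ z in a..b, m z ≤ g a - g b := by
  rcases eq_or_lt_of_le hab with rfl | hab'
  · simp
  have key : ∀ n : ℕ, 0 < n →
      ∫ z in a..b, m z ≤ g a - g b + (b - a)/n * (m a - m b) := by
    intro n hn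
    have hnR : (0:ℝ) < n := Nat.cast_pos.mpr hn
    set δ := (b - a)/n with hδ
    have hδpos : 0 < δ := div_pos (by linarith) hnR
    set z : ℕ → ℝ := fun i => a + i * δ with hz
    have hz0 : z 0 = a := by simp [hz]
    have hzn : z n = b := by
      simp only [hz, hδ]
      field_simp
      ring
    have hzmono : ∀ i j : ℕ, i ≤ j → z i ≤ z j := by
      intro i j hij
      simp only [hz]
      have h1 : (i:ℝ) ≤ j := Nat.cast_le.mpr hij
      nlinarith
    have hzmem : ∀ i : ℕ, i ≤ n → z i ∈ Icc a b := by
      intro i hi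
      exact ⟨hz0 ▸ hzmono 0 i (Nat.zero_le _), hzn ▸ hzmono i n hi⟩
    have hsucc : ∀ i : ℕ, z (i+1) - z i = δ := by
      intro i; simp only [hz]; push_cast; ring
    have hint : ∀ i j : ℕ, i ≤ n → j ≤ n → IntervalIntegrable m MeasureTheory.volume (z i) (z j) := by
      intro i j hi hj
      apply hm_int.mono_set
      rw [uIcc_of_le hab]
      exact uIcc_subset_Icc (hzmem i hi) (hzmem j hj)
    have hsum : ∑ i ∈ Finset.range n, ∫ x in z i..z (i+1), m x = ∫ x in a..b, m x := by
      rw [intervalIntegral.sum_integral_adjacent_intervals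
        (fun k hk => hint k (k+1) (by omega) (by omega))]
      rw [hz0, hzn]
    have hbound : ∀ i < n, ∫ x in z i..z (i+1), m x ≤ δ * m (z i) := by
      intro i hi
      have h1 : z i ≤ z (i+1) := hzmono i (i+1) (by omega)
      have hmi := hzmem i (by omega)
      have hmi1 := hzmem (i+1) (by omega)
      calc ∫ x in z i..z (i+1), m x ≤ ∫ _x in z i..z (i+1), m (z i) := by
            apply intervalIntegral.integral_mono_on h1 (hint i (i+1) (by omega) (by omega))
              intervalIntegrable_const
            intro x hx
            exact hm_anti hmi ⟨le_trans hmi.1 hx.1, le_trans hx.2 hmi1.2⟩ hx.1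
        _ = δ * m (z i) := by
            rw [intervalIntegral.integral_const, smul_eq_mul, hsucc]
    have hkey' : ∀ i < n, δ * m (z (i+1)) ≤ g (z i) - g (z (i+1)) := by
      intro i hi
      have h := hkey (z i) (hzmem i (by omega)) (z (i+1)) (hzmem (i+1) (by omega))
        (hzmono i (i+1) (by omega))
      rwa [hsucc i] at h
    calc ∫ x in a..b, m x = ∑ i ∈ Finset.range n, ∫ x in z i..z (i+1), m x := hsum.symm
      _ ≤ ∑ i ∈ Finset.range n, δ * m (z i) :=
          Finset.sum_le_sum (fun i hi => hbound i (Finset.mem_range.mp hi))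
      _ = ∑ i ∈ Finset.range n, (δ * m (z (i+1)) + δ * (m (z i) - m (z (i+1)))) := by
          apply Finset.sum_congr rfl; intro i _; ring
      _ = ∑ i ∈ Finset.range n, δ * m (z (i+1)) + δ * (m a - m b) := by
          rw [Finset.sum_add_distrib]
          congr 1
          rw [← Finset.mul_sum, Finset.sum_range_sub' (fun i => m (z i)), hz0, hzn]
      _ ≤ ∑ i ∈ Finset.range n, (g (z i) - g (z (i+1))) + δ * (m a - m b) := by
          apply add_le_add_left
          exact Finset.sum_le_sum (fun i hi => hkey' i (Finset.mem_range.mp hi))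
      _ = g a - g b + δ * (m a - m b) := by
          rw [Finset.sum_range_sub' (fun i => g (z i)), hz0, hzn]
  have hlim : Tendsto (fun n : ℕ => g a - g b + (b - a)/n * (m a - m b)) atTop
      (𝓝 (g a - g b + 0 * (m a - m b))) := by
    apply Tendsto.add tendsto_const_nhds
    apply Tendsto.mul_const
    exact Tendsto.div_atTop tendsto_const_nhds tendsto_natCast_atTop_atTop
  have := ge_of_tendsto hlim (by
    filter_upwards [eventually_ge_atTop 1] with n hn
    exact key n hn)
  linarith [this]


lemma lowerset_measure_le (G G' : MeasureTheory.Measure ℝ)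
    [IsProbabilityMeasure G] [IsProbabilityMeasure G']
    (hFOSD : ∀ θ : ℝ, ProbabilityTheory.cdf G' θ ≤ ProbabilityTheory.cdf G θ)
    (S : Set ℝ) (hS : IsLowerSet S) : G' S ≤ G S := by
  have hIic : ∀ s : ℝ, G' (Iic s) ≤ G (Iic s) := by
    intro s
    have h := hFOSD s
    rw [ProbabilityTheory.cdf_eq_real, ProbabilityTheory.cdf_eq_real] at h
    exact (ENNReal.toReal_le_toReal (measure_ne_top _ _) (measure_ne_top _ _)).mp h
  rcases S.eq_empty_or_nonempty with rfl | hne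
  · simp
  by_cases hb : BddAbove S
  · set s := sSup S with hs
    by_cases hmem : s ∈ S
    · have hSeq : S = Iic s :=
        subset_antisymm (fun x hx => le_csSup hb hx) (fun x hx => hS hx hmem)
      rw [hSeq]; exact hIic s
    · have hSeq : S = Iio s := by
        apply subset_antisymm
        · intro x hx
          exact lt_of_le_of_ne (le_csSup hb hx) (fun h => hmem (by rw [hs, ← h]; exact hx))
        · intro x hx
          obtain ⟨y, hy, hxy⟩ := exists_lt_of_lt_csSup hne hx
          exact hS hxy.le hy
      rw [hSeq]
      have hunion : Iio s = ⋃ n : ℕ, Iic (s - 1/((n:ℝ)+1)) := by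
        ext x
        simp only [mem_Iio, mem_iUnion, mem_Iic]
        constructor
        · intro hx
          obtain ⟨n, hn⟩ := exists_nat_one_div_lt (sub_pos.mpr hx)
          exact ⟨n, by push_cast at hn ⊢; linarith⟩
        · rintro ⟨n, hn⟩
          have h1 : (0:ℝ) < 1/((n:ℝ)+1) := by positivity
          linarith
      have hmono : Monotone (fun n : ℕ => Iic (s - 1/((n:ℝ)+1))) := by
        intro i j hij
        apply Iic_subset_Iic.mpr
        have h1 : (1:ℝ)/((j:ℝ)+1) ≤ 1/((i:ℝ)+1) := by
          apply one_div_le_one_div_of_le (by positivity)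
          have : (i:ℝ) ≤ j := Nat.cast_le.mpr hij
          linarith
        linarith
      rw [hunion, hmono.measure_iUnion]
      apply iSup_le
      intro n
      exact (hIic _).trans (measure_mono (subset_iUnion (fun k : ℕ => Iic (s - 1/((k:ℝ)+1))) n))
  · have hSeq : S = univ := by
      ext x
      simp only [mem_univ, iff_true]
      obtain ⟨y, hy, hxy⟩ := not_bddAbove_iff.mp hb x
      exact hS hxy.le hy
    rw [hSeq]
    simp [measure_univ]

lemma fosd_integral_le (θl θh : ℝ) (hle : θl ≤ θh) (f : ℝ → ℝ)
    (hanti : AntitoneOn f (Icc θl θh)) (hnn : ∀ θ ∈ Icc θl θh, 0 ≤ f θ)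
    (G G' : MeasureTheory.Measure ℝ)
    [IsProbabilityMeasure G] [IsProbabilityMeasure G']
    (hGsupp : G (Set.Icc θl θh)ᶜ = 0) (hG'supp : G' (Set.Icc θl θh)ᶜ = 0)
    (hFOSD : ∀ θ : ℝ, ProbabilityTheory.cdf G' θ ≤ ProbabilityTheory.cdf G θ) :
    ∫ θ, f θ ∂G' ≤ ∫ θ, f θ ∂G := by
  set cl : ℝ → ℝ := fun x => max θl (min x θh) with hcl
  have hclmem : ∀ x, cl x ∈ Icc θl θh :=
    fun x => ⟨le_max_left _ _, max_le hle (min_le_right _ _)⟩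
  have hclmono : Monotone cl := fun x y hxy =>
    max_le_max le_rfl (min_le_min hxy le_rfl)
  set g : ℝ → ℝ := fun x => f (cl x) with hg
  have hganti : Antitone g := fun x y hxy => hanti (hclmem x) (hclmem y) (hclmono hxy)
  have hgnn : ∀ x, 0 ≤ g x := fun x => hnn _ (hclmem x)
  have hgm : Measurable g := hganti.measurable
  have heq : ∀ x ∈ Icc θl θh, f x = g x := by
    intro x hx
    have hclx : cl x = x := by
      rw [hcl]; simp only; rw [min_eq_left hx.2, max_eq_right hx.1]
    rw [hg]; simp only [hclx]
  have hae : ∀ (μ : MeasureTheory.Measure ℝ), μ (Set.Icc θl θh)ᶜ = 0 →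
      ∫ θ, f θ ∂μ = ∫ θ, g θ ∂μ := by
    intro μ hμ
    apply integral_congr_ae
    rw [Filter.EventuallyEq, ae_iff]
    apply measure_mono_null _ hμ
    intro x hx
    simp only [mem_setOf_eq] at hx
    simp only [mem_compl_iff]
    exact fun hmem => hx (heq x hmem)
  rw [hae G hGsupp, hae G' hG'supp]
  have hrepr : ∀ (μ : MeasureTheory.Measure ℝ) [IsProbabilityMeasure μ],
      ∫ θ, g θ ∂μ = (∫⁻ t in Ioi (0:ℝ), μ {a | t < g a}).toReal := by
    intro μ _
    rw [integral_eq_lintegral_of_nonneg_ae (ae_of_all _ hgnn) hgm.aestronglyMeasurable,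
      lintegral_eq_lintegral_meas_lt μ (ae_of_all _ hgnn) hgm.aemeasurable]
  rw [hrepr G, hrepr G']
  have hmle : ∫⁻ t in Ioi (0:ℝ), G' {a | t < g a} ≤ ∫⁻ t in Ioi (0:ℝ), G {a | t < g a} := by
    apply lintegral_mono
    intro t
    apply lowerset_measure_le G G' hFOSD
    intro x y hyx hx
    exact lt_of_lt_of_le hx (hganti hyx)
  have hub : ∀ x, g x ≤ f θl := fun x => hanti ⟨le_rfl, hle⟩ (hclmem x) (hclmem x).1
  have hfin : ∫⁻ t in Ioi (0:ℝ), G {a | t < g a} ≠ ⊤ := by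
    rw [← lintegral_eq_lintegral_meas_lt G (ae_of_all _ hgnn) hgm.aemeasurable]
    apply ne_of_lt
    calc ∫⁻ ω, ENNReal.ofReal (g ω) ∂G ≤ ∫⁻ _, ENNReal.ofReal (f θl) ∂G :=
          lintegral_mono (fun x => ENNReal.ofReal_le_ofReal (hub x))
      _ = ENNReal.ofReal (f θl) := by simp
      _ < ⊤ := ENNReal.ofReal_lt_top
  exact ENNReal.toReal_mono hfin hmle

theorem stmt13 (θl θh qbar c α qhat : ℝ) (P qe r q u : ℝ → ℝ)
    (h0 : 0 < θl) (hlt : θl < θh) (hqbar : 0 < qbar) (hc : 0 < c)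
    (hα0 : 0 ≤ α) (hα1 : α < 1)
    (hPcont : ContinuousOn P (Icc 0 qbar))
    (hPanti : StrictAntiOn P (Icc 0 qbar))
    (hPqbar : P qbar = 0)
    (hqe : ∀ θ ∈ Icc θl θh, qe θ ∈ Icc 0 qbar ∧ P (qe θ) = θ)
    (hA2 : V P (qe θh) - c - θh * qe θh > 0)
    (hqhat_mem : qhat ∈ Ioo 0 qbar)
    (hqhat_eq : V P qhat - qhat * P qhat = c)
    (hvalid : Valid θl θh qbar r q)
    (hFR : FloorRandomized θl θh qhat r q u)
    (hDD : DD θl θh qe q)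
    (G G' : MeasureTheory.Measure ℝ)
    [IsProbabilityMeasure G] [IsProbabilityMeasure G']
    (hGsupp : G (Set.Icc θl θh)ᶜ = 0) (hG'supp : G' (Set.Icc θl θh)ᶜ = 0)
    (hFOSD : ∀ θ : ℝ, ProbabilityTheory.cdf G' θ ≤ ProbabilityTheory.cdf G θ) :
    AntitoneOn (RS P c α r q u) (Icc θl θh) ∧
    (∀ θ ∈ Icc θl θh, 0 ≤ RS P c α r q u θ) ∧
    ∫ θ, RS P c α r q u θ ∂G' ≤ ∫ θ, RS P c α r q u θ ∂G := by
  obtain ⟨hIC, hIR, huh, T1, T01, T0, hunion, hO1, hO2, hO3, _, _, _, hT1, hT01, hT0⟩ := hFR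
  have hIcc : θl ≤ θh := le_of_lt hlt
  have hθhm : θh ∈ Icc θl θh := ⟨hIcc, le_rfl⟩
  set m : ℝ → ℝ := fun z => q z * r z with hm
  have hm_anti : AntitoneOn m (Icc θl θh) := hIC.1
  have hr01 := hvalid.1
  have hq01 := hvalid.2
  have hm_nn : ∀ z ∈ Icc θl θh, 0 ≤ m z := fun z hz =>
    mul_nonneg (hq01 z hz).1 (hr01 z hz).1
  have hm_int : IntervalIntegrable m MeasureTheory.volume θl θh := by
    apply AntitoneOn.intervalIntegrable
    rwa [uIcc_of_le hIcc]
  have hm_int' : ∀ x ∈ Icc θl θh, ∀ y ∈ Icc θl θh,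
      IntervalIntegrable m MeasureTheory.volume x y := fun x hx y hy =>
    hm_int.mono_set (by rw [uIcc_of_le hIcc]; exact uIcc_subset_Icc hx hy)
  -- facts about V and P
  have hPint : ∀ x ∈ Icc (0:ℝ) qbar, ∀ y ∈ Icc (0:ℝ) qbar,
      IntervalIntegrable P MeasureTheory.volume x y := by
    intro x hx y hy
    exact (hPcont.mono (uIcc_subset_Icc hx hy)).intervalIntegrable
  have h0qbar : (0:ℝ) ∈ Icc (0:ℝ) qbar := ⟨le_rfl, hqbar.le⟩
  have hVdiff : ∀ x ∈ Icc (0:ℝ) qbar, ∀ y ∈ Icc (0:ℝ) qbar,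
      V P y - V P x = ∫ z in x..y, P z := by
    intro x hx y hy
    rw [V, V, intervalIntegral.integral_interval_sub_left (hPint 0 h0qbar y hy)
      (hPint 0 h0qbar x hx)]
  have hVlb : ∀ x y, x ∈ Icc (0:ℝ) qbar → y ∈ Icc (0:ℝ) qbar → x ≤ y →
      (y - x) * P y ≤ V P y - V P x := by
    intro x y hx hy hxy
    rw [hVdiff x hx y hy]
    have hmono : ∀ z ∈ Icc x y, P y ≤ P z := fun z hz =>
      hPanti.antitoneOn ⟨le_trans hx.1 hz.1, le_trans hz.2 hy.2⟩ hy hz.2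
    calc (y - x) * P y = ∫ _z in x..y, P y := by
          rw [intervalIntegral.integral_const, smul_eq_mul]
      _ ≤ ∫ z in x..y, P z :=
          intervalIntegral.integral_mono_on hxy intervalIntegrable_const (hPint x hx y hy) hmono
  have hqhat0 : 0 < qhat := hqhat_mem.1
  have hqhatm : qhat ∈ Icc (0:ℝ) qbar := ⟨hqhat0.le, hqhat_mem.2.le⟩
  obtain ⟨hqeθh_mem, hqeθh_eq⟩ := hqe θh hθhm
  -- the key price bound : θh < P qhat
  have hK : θh < P qhat := by
    by_contra hcon
    push_neg at hcon
    have h1 : qe θh ≤ qhat := by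
      by_contra h2
      push_neg at h2
      have h3 := hPanti hqhatm hqeθh_mem h2
      rw [hqeθh_eq] at h3
      linarith
    have h2 := hVlb (qe θh) qhat hqeθh_mem hqhatm h1
    have h4 : 0 ≤ qe θh := hqeθh_mem.1
    nlinarith [hA2, hqhat_eq]
  -- downward distortion : z ≤ P (q z)
  have hPq : ∀ z ∈ Icc θl θh, z ≤ P (q z) := by
    intro z hz
    obtain ⟨hqez, hqez_eq⟩ := hqe z hz
    have h1 : q z ≤ qe z := hDD.1 z hz
    have h2 := hPanti.antitoneOn (hq01 z hz) hqez h1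
    rw [hqez_eq] at h2
    exact h2
  have hVstep : ∀ z ∈ Icc θl θh, qhat ≤ q z →
      V P qhat - z * qhat ≤ V P (q z) - z * (q z) := by
    intro z hz hq
    have h1 := hVlb qhat (q z) hqhatm (hq01 z hz) hq
    have h2 := hPq z hz
    nlinarith [mul_nonneg (sub_nonneg.2 hq) (sub_nonneg.2 h2)]
  set W : ℝ → ℝ := fun θ => r θ * (V P (q θ) - c - θ * q θ) with hWdef
  have hRS : ∀ θ, RS P c α r q u θ = W θ - (1 - α) * u θ := fun θ => rfl
  have hmem3 : ∀ z ∈ Icc θl θh, z ∈ T1 ∨ z ∈ T01 ∨ z ∈ T0 := by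
    intro z hz
    rw [← hunion] at hz
    rcases hz with (h | h) | h
    exacts [Or.inl h, Or.inr (Or.inl h), Or.inr (Or.inr h)]
  have hW1 : ∀ z ∈ T1, W z = V P (q z) - c - z * q z := by
    intro z hz
    rw [hWdef]
    simp only [(hT1 z hz).2, one_mul]
  have hm1 : ∀ z ∈ T1, m z = q z := by
    intro z hz
    rw [hm]
    simp only [(hT1 z hz).2, mul_one]
  have hco : V P qhat - c = qhat * P qhat := by linarith [hqhat_eq]
  have hW01 : ∀ z ∈ T01, W z = r z * (qhat * (P qhat - z)) := by
    intro z hz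
    rw [hWdef]
    simp only [(hT01 z hz).1]
    have h : V P qhat - c - z * qhat = qhat * (P qhat - z) := by linear_combination hqhat_eq
    rw [h]
  have hm01 : ∀ z ∈ T01, m z = qhat * r z := by
    intro z hz
    rw [hm]
    simp only [(hT01 z hz).1]
  have hW0 : ∀ z ∈ T0, W z = 0 := by
    intro z hz
    rw [hWdef]
    simp only [(hT0 z hz).2, zero_mul]
  have hm0 : ∀ z ∈ T0, m z = 0 := by
    intro z hz
    rw [hm]
    simp only [(hT0 z hz).2, mul_zero]
  -- the two-point supergradient bound
  have hkey : ∀ x ∈ Icc θl θh, ∀ y ∈ Icc θl θh, x ≤ y → (y - x) * m y ≤ W x - W y := by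
    intro x hx y hy hxy
    have hKy : y ≤ P qhat := le_of_lt (lt_of_le_of_lt hy.2 hK)
    have hKx : x ≤ P qhat := le_of_lt (lt_of_le_of_lt hx.2 hK)
    rcases hmem3 x hx with hx1 | hx01 | hx0 <;> rcases hmem3 y hy with hy1 | hy01 | hy0
    · -- T1, T1
      rw [hW1 x hx1, hW1 y hy1, hm1 y hy1]
      have hqyx : q y ≤ q x := by
        have h1 := hm_anti hx hy hxy
        rw [hm1 x hx1, hm1 y hy1] at h1
        exact h1
      have h2 := hVlb (q y) (q x) (hq01 y hy) (hq01 x hx) hqyx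
      have h3 := hPq x hx
      nlinarith [mul_nonneg (sub_nonneg.2 hqyx) (sub_nonneg.2 h3)]
    · -- T1, T01
      rw [hW1 x hx1, hW01 y hy01, hm01 y hy01]
      have hry := hr01 y hy
      have hstep := hVstep x hx (hT1 x hx1).1
      nlinarith [mul_nonneg (mul_nonneg (sub_nonneg.2 hry.2) (sub_nonneg.2 hKx)) hqhat0.le,
        hqhat_eq]
    · -- T1, T0
      rw [hW1 x hx1, hW0 y hy0, hm0 y hy0]
      have hstep := hVstep x hx (hT1 x hx1).1
      nlinarith [hqhat_eq, mul_nonneg hqhat0.le (sub_nonneg.2 hKx)]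
    · -- T01, T1 : impossible
      exact absurd (hO1 x hx01 y hy1) (by linarith)
    · -- T01, T01
      rw [hW01 x hx01, hW01 y hy01, hm01 y hy01]
      have hryx : r y ≤ r x := by
        have h1 := hm_anti hx hy hxy
        rw [hm01 x hx01, hm01 y hy01] at h1
        exact (mul_le_mul_iff_right₀ hqhat0).mp h1
      have hry := (hr01 y hy).1
      nlinarith [mul_nonneg (mul_nonneg hqhat0.le (sub_nonneg.2 hryx)) (sub_nonneg.2 hKx)]
    · -- T01, T0
      rw [hW01 x hx01, hW0 y hy0, hm0 y hy0]
      have hrx := (hr01 x hx).1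
      have := mul_nonneg hrx (mul_nonneg hqhat0.le (sub_nonneg.2 hKx))
      linarith
    · -- T0, T1 : impossible
      exact absurd (hO3 x hx0 y hy1) (by linarith)
    · -- T0, T01 : impossible
      exact absurd (hO2 x hx0 y hy01) (by linarith)
    · -- T0, T0
      rw [hW0 x hx0, hW0 y hy0, hm0 y hy0]
      simp
  have hWnn : ∀ z ∈ Icc θl θh, 0 ≤ W z := by
    intro z hz
    have hKz : z ≤ P qhat := le_of_lt (lt_of_le_of_lt hz.2 hK)
    rcases hmem3 z hz with h | h | h
    · rw [hW1 z h]
      have hstep := hVstep z hz (hT1 z h).1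
      nlinarith [hqhat_eq, mul_nonneg hqhat0.le (sub_nonneg.2 hKz)]
    · rw [hW01 z h]
      exact mul_nonneg (hr01 z hz).1 (mul_nonneg hqhat0.le (sub_nonneg.2 hKz))
    · rw [hW0 z h]
  have hWint : ∀ x ∈ Icc θl θh, ∀ y ∈ Icc θl θh, x ≤ y →
      (∫ z in x..y, m z) ≤ W x - W y := by
    intro x hx y hy hxy
    apply riemann_aux hxy (hm_int' x hx y hy)
      (hm_anti.mono (Icc_subset_Icc hx.1 hy.2))
    intro a ha b hb hab
    exact hkey a ⟨le_trans hx.1 ha.1, le_trans ha.2 hy.2⟩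
      b ⟨le_trans hx.1 hb.1, le_trans hb.2 hy.2⟩ hab
  have hu : ∀ θ ∈ Icc θl θh, u θ = ∫ z in θ..θh, m z := by
    intro θ hθ
    rw [hIC.2 θ hθ, huh, zero_add]
  have hAnti : AntitoneOn (RS P c α r q u) (Icc θl θh) := by
    intro x hx y hy hxy
    rw [hRS, hRS]
    have hI : u x - u y = ∫ z in x..y, m z := by
      rw [hu x hx, hu y hy,
        ← intervalIntegral.integral_add_adjacent_intervals (hm_int' x hx y hy)
          (hm_int' y hy θh hθhm)]
      ring
    have hIpos : 0 ≤ ∫ z in x..y, m z := by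
      apply intervalIntegral.integral_nonneg hxy
      intro z hz
      exact hm_nn z ⟨le_trans hx.1 hz.1, le_trans hz.2 hy.2⟩
    have hWd := hWint x hx y hy hxy
    nlinarith [mul_nonneg hα0 hIpos]
  have hNN : ∀ θ ∈ Icc θl θh, 0 ≤ RS P c α r q u θ := by
    intro θ hθ
    have h1 := hAnti hθ hθhm hθ.2
    have h2 : RS P c α r q u θh = W θh := by
      rw [hRS, huh]
      ring
    have h3 := hWnn θh hθhm
    linarith
  exact ⟨hAnti, hNN, fosd_integral_le θl θh hIcc _ hAnti hNN G G' hGsupp hG'supp hFOSD⟩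
end

section
/- Key surplus inequality for monotonicity: let P be strictly decreasing, q decreasing with q(θ) ≤ P⁻¹(θ) for all θ (downward distortion), and θ < θ'. Then ∫_{q(θ')}^{q(θ)} (P(z) - θ) dz ≥ ∫_θ^{θ'} (q(y) - q(θ')) dy. -/
open Set Filter MeasureTheory

theorem stmt14 (θl θh qbar : ℝ) (P q : ℝ → ℝ)
    (h0 : 0 < θl) (hlt : θl < θh) (hqbar : 0 < qbar)
    (hPcont : ContinuousOn P (Icc 0 qbar))
    (hPanti : StrictAntiOn P (Icc 0 qbar))
    (hq_range : ∀ θ ∈ Icc θl θh, q θ ∈ Icc (0:ℝ) qbar)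
    (hq_anti : AntitoneOn q (Icc θl θh))
    (hDD : ∀ θ ∈ Icc θl θh, θ ≤ P (q θ))
    (θ θ' : ℝ) (hθ : θ ∈ Icc θl θh) (hθ' : θ' ∈ Icc θl θh) (hθθ' : θ < θ') :
    (∫ z in (q θ')..(q θ), (P z - θ)) ≥ ∫ y in θ..θ', (q y - q θ') := by
  classical
  obtain ⟨hθ1, hθ2⟩ := hθ
  obtain ⟨hθ'1, hθ'2⟩ := hθ'
  have hPanti' : AntitoneOn P (Icc 0 qbar) := hPanti.antitoneOn
  have hqθ := hq_range θ ⟨hθ1, hθ2⟩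
  have hqθ' := hq_range θ' ⟨hθ'1, hθ'2⟩
  have hqq : q θ' ≤ q θ := hq_anti ⟨hθ1, hθ2⟩ ⟨hθ'1, hθ'2⟩ hθθ'.le
  -- globally antitone extension of q
  set Q : ℝ → ℝ := fun y => q (min θh (max θl y)) with hQdef
  have hclamp : ∀ y, min θh (max θl y) ∈ Icc θl θh := fun y =>
    ⟨le_min hlt.le (le_max_left _ _), min_le_left _ _⟩
  have hQanti : Antitone Q := fun a b hab =>
    hq_anti (hclamp a) (hclamp b) (min_le_min le_rfl (max_le_max le_rfl hab))
  have hQeq : ∀ y ∈ Icc θl θh, Q y = q y := by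
    intro y hy
    simp only [hQdef, max_eq_right hy.1, min_eq_right hy.2]
  -- the region
  set S : Set (ℝ × ℝ) := {p | p.1 ∈ Ioc θ θ' ∧ p.2 ∈ Ioc (q θ') (Q p.1)} with hSdef
  have hS : MeasurableSet S := by
    have h1 : S = (Ioc θ θ' ×ˢ Ioi (q θ')) ∩ {p : ℝ × ℝ | p.2 ≤ Q p.1} := by
      ext ⟨y, z⟩
      simp only [hSdef, Set.mem_setOf_eq, Set.mem_inter_iff, Set.mem_prod, Set.mem_Ioc,
        Set.mem_Ioi]
      tauto
    rw [h1]
    exact (measurableSet_Ioc.prod measurableSet_Ioi).inter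
      (measurableSet_le measurable_snd (hQanti.measurable.comp measurable_fst))
  -- first Fubini direction
  have hfiber : (fun y => volume (Prod.mk y ⁻¹' S)) =
      (Ioc θ θ').indicator (fun y => ENNReal.ofReal (Q y - q θ')) := by
    funext y
    by_cases hy : y ∈ Ioc θ θ'
    · have : Prod.mk y ⁻¹' S = Ioc (q θ') (Q y) := by
        ext z
        rw [Set.mem_Ioc] at hy
        simp only [hSdef, Set.mem_preimage, Set.mem_setOf_eq, Set.mem_Ioc]
        tauto
      rw [this, Real.volume_Ioc, Set.indicator_of_mem hy]
    · have : Prod.mk y ⁻¹' S = ∅ := by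
        ext z
        simp only [hSdef, Set.mem_preimage, Set.mem_setOf_eq, hy, false_and,
          Set.mem_empty_iff_false]
      rw [this, measure_empty, Set.indicator_of_notMem hy]
  have hfub1 : (volume.prod volume) S = ∫⁻ y in Ioc θ θ', ENNReal.ofReal (Q y - q θ') := by
    rw [Measure.prod_apply hS, hfiber, lintegral_indicator measurableSet_Ioc]
  -- second Fubini direction, with the slice bound
  have hslice : ∀ z : ℝ, volume ((fun y => (y, z)) ⁻¹' S) ≤
      (Ioc (q θ') (q θ)).indicator (fun z => ENNReal.ofReal (P z - θ)) z := by
    intro z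
    by_cases hz : z ∈ Ioc (q θ') (q θ)
    · rw [Set.indicator_of_mem hz]
      have hsub : ((fun y => (y, z)) ⁻¹' S) ⊆ Ioc θ (P z) := by
        intro y hy
        simp only [hSdef, Set.mem_preimage, Set.mem_setOf_eq] at hy
        obtain ⟨hy1, hy2⟩ := hy
        have hyIcc : y ∈ Icc θl θh := ⟨hθ1.trans hy1.1.le, hy1.2.trans hθ'2⟩
        rw [hQeq y hyIcc] at hy2
        have hqy := hq_range y hyIcc
        have hzmem : z ∈ Icc (0:ℝ) qbar := ⟨hqθ'.1.trans hz.1.le, hy2.2.trans hqy.2⟩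
        have : P (q y) ≤ P z := hPanti' hzmem hqy hy2.2
        exact ⟨hy1.1, (hDD y hyIcc).trans this⟩
      calc volume ((fun y => (y, z)) ⁻¹' S) ≤ volume (Ioc θ (P z)) := measure_mono hsub
        _ = ENNReal.ofReal (P z - θ) := Real.volume_Ioc
    · rw [Set.indicator_of_notMem hz]
      have : ((fun y => (y, z)) ⁻¹' S) = ∅ := by
        ext y
        simp only [hSdef, Set.mem_preimage, Set.mem_setOf_eq, Set.mem_empty_iff_false,
          iff_false, not_and]
        intro hy1 hy2
        apply hz
        have hyIcc : y ∈ Icc θl θh := ⟨hθ1.trans hy1.1.le, hy1.2.trans hθ'2⟩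
        rw [hQeq y hyIcc] at hy2
        have : q y ≤ q θ := hq_anti ⟨hθ1, hθ2⟩ hyIcc hy1.1.le
        exact ⟨hy2.1, hy2.2.trans this⟩
      simp [this]
  have hfub2 : (volume.prod volume) S ≤ ∫⁻ z in Ioc (q θ') (q θ), ENNReal.ofReal (P z - θ) := by
    rw [Measure.prod_apply_symm hS, ← lintegral_indicator measurableSet_Ioc]
    exact lintegral_mono hslice
  -- integrability facts
  have hqint : IntegrableOn (fun y => q y - q θ') (Ioc θ θ') := by
    have h1 : AntitoneOn q (uIcc θ θ') := by
      rw [uIcc_of_le hθθ'.le]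
      exact hq_anti.mono (Icc_subset_Icc hθ1 hθ'2)
    have := h1.intervalIntegrable.sub (intervalIntegrable_const : IntervalIntegrable (fun _ => q θ') volume θ θ')
    rwa [intervalIntegrable_iff_integrableOn_Ioc_of_le hθθ'.le] at this
  have hPint : IntegrableOn (fun z => P z - θ) (Ioc (q θ') (q θ)) := by
    have h1 : IntegrableOn P (Icc (q θ') (q θ)) :=
      (hPcont.mono (Icc_subset_Icc hqθ'.1 hqθ.2)).integrableOn_Icc
    exact ((h1.mono_set Ioc_subset_Icc_self).sub ((integrableOn_const_iff).mpr
      (Or.inr measure_Ioc_lt_top)))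
  -- nonnegativity
  have hqnn : ∀ y ∈ Ioc θ θ', 0 ≤ q y - q θ' := by
    intro y hy
    have hyIcc : y ∈ Icc θl θh := ⟨hθ1.trans hy.1.le, hy.2.trans hθ'2⟩
    have := hq_anti hyIcc ⟨hθ'1, hθ'2⟩ hy.2
    linarith
  have hPnn : ∀ z ∈ Ioc (q θ') (q θ), 0 ≤ P z - θ := by
    intro z hz
    have hzmem : z ∈ Icc (0:ℝ) qbar := ⟨hqθ'.1.trans hz.1.le, hz.2.trans hqθ.2⟩
    have h1 : P (q θ) ≤ P z := hPanti' hzmem hqθ hz.2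
    have h2 := hDD θ ⟨hθ1, hθ2⟩
    linarith
  -- convert the interval integrals
  have hR : ENNReal.ofReal (∫ y in θ..θ', (q y - q θ')) =
      ∫⁻ y in Ioc θ θ', ENNReal.ofReal (Q y - q θ') := by
    rw [intervalIntegral.integral_of_le hθθ'.le,
      ofReal_integral_eq_lintegral_ofReal hqint
        ((ae_restrict_iff' measurableSet_Ioc).mpr (ae_of_all _ hqnn))]
    refine setLIntegral_congr_fun measurableSet_Ioc (fun y hy => ?_)
    rw [hQeq y ⟨hθ1.trans hy.1.le, hy.2.trans hθ'2⟩]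
  have hL : ENNReal.ofReal (∫ z in (q θ')..(q θ), (P z - θ)) =
      ∫⁻ z in Ioc (q θ') (q θ), ENNReal.ofReal (P z - θ) := by
    rw [intervalIntegral.integral_of_le hqq,
      ofReal_integral_eq_lintegral_ofReal hPint
        ((ae_restrict_iff' measurableSet_Ioc).mpr (ae_of_all _ hPnn))]
  have hLnn : 0 ≤ ∫ z in (q θ')..(q θ), (P z - θ) := by
    rw [intervalIntegral.integral_of_le hqq]
    exact setIntegral_nonneg measurableSet_Ioc hPnn
  have key : ENNReal.ofReal (∫ y in θ..θ', (q y - q θ')) ≤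
      ENNReal.ofReal (∫ z in (q θ')..(q θ), (P z - θ)) := by
    rw [hR, hL, ← hfub1]
    exact hfub2
  exact (ENNReal.ofReal_le_ofReal_iff hLnn).mp key
end

section
/- Let M = (r, q, u) be a floor-randomized mechanism satisfying downward distortion and left-continuity, and suppose M is dominated by a floor-randomized, left-continuous, DD mechanism M̃ = (r̃, q̃, ũ). If the set D = {θ : q̃(θ)r̃(θ) > q(θ)r(θ)} is nonempty, then ũ(θ) < u(θ) for every θ ∈ D. -/
open Set Filter MeasureTheory

noncomputable def phi (P : ℝ → ℝ) (c z qhat t : ℝ) : ℝ :=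
  if qhat ≤ t then V P t - c - z * t else t * (P qhat - z)

lemma Vdiff {P : ℝ → ℝ} {qbar a b z : ℝ} (hPcont : ContinuousOn P (Set.Icc 0 qbar))
    (ha : 0 ≤ a) (hab : a ≤ b) (hb : b ≤ qbar)
    (hz : ∀ s ∈ Set.Icc a b, z ≤ P s) :
    V P a + z * (b - a) ≤ V P b := by
  have hsub1 : Set.uIcc 0 a ⊆ Set.Icc 0 qbar := by
    rw [Set.uIcc_of_le ha]; exact Set.Icc_subset_Icc le_rfl (hab.trans hb)
  have hsub2 : Set.uIcc a b ⊆ Set.Icc 0 qbar := by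
    rw [Set.uIcc_of_le hab]; exact Set.Icc_subset_Icc ha hb
  have hia : IntervalIntegrable P volume 0 a := (hPcont.mono hsub1).intervalIntegrable
  have hiab : IntervalIntegrable P volume a b := (hPcont.mono hsub2).intervalIntegrable
  have hadd : V P a + ∫ s in a..b, P s = V P b :=
    intervalIntegral.integral_add_adjacent_intervals hia hiab
  have hmono : (∫ _s in a..b, z) ≤ ∫ s in a..b, P s :=
    intervalIntegral.integral_mono_on hab intervalIntegrable_const hiab hz
  rw [intervalIntegral.integral_const, smul_eq_mul] at hmono
  nlinarith [hmono, hadd]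

lemma phi_mono {P : ℝ → ℝ} {c z qbar qhat qez a b : ℝ}
    (hPcont : ContinuousOn P (Set.Icc 0 qbar))
    (hqhat0 : 0 < qhat) (hqhat_eq : V P qhat - qhat * P qhat = c)
    (hqez : qez ≤ qbar)
    (hzs : ∀ s ∈ Set.Icc 0 qez, z ≤ P s)
    (hzq : z ≤ P qhat)
    (ha : 0 ≤ a) (hab : a ≤ b) (hb : b ≤ qez) :
    phi P c z qhat a ≤ phi P c z qhat b := by
  have hb' : b ≤ qbar := hb.trans hqez
  by_cases h1 : qhat ≤ a
  · have h2 : qhat ≤ b := h1.trans hab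
    rw [phi, phi, if_pos h1, if_pos h2]
    have := Vdiff hPcont ha hab hb' (fun s hs => hzs s ⟨ha.trans hs.1, hs.2.trans hb⟩)
    linarith
  · push_neg at h1
    by_cases h2 : qhat ≤ b
    · rw [phi, phi, if_neg (not_le.2 h1), if_pos h2]
      have hV := Vdiff hPcont hqhat0.le h2 hb'
        (fun s hs => hzs s ⟨hqhat0.le.trans hs.1, hs.2.trans hb⟩)
      have h3 : a * (P qhat - z) ≤ qhat * (P qhat - z) :=
        mul_le_mul_of_nonneg_right h1.le (by linarith)
      have h4 : qhat * (P qhat - z) = V P qhat - c - z * qhat := by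
        linear_combination -hqhat_eq
      linarith
    · rw [phi, phi, if_neg (not_le.2 h1), if_neg h2]
      exact mul_le_mul_of_nonneg_right hab (by linarith)
lemma FR_mem {θl θh qhat z : ℝ} {r q u : ℝ → ℝ}
    (hFR : FloorRandomized θl θh qhat r q u) (hz : z ∈ Set.Icc θl θh) :
    (qhat ≤ q z ∧ r z = 1) ∨ (q z = qhat ∧ r z ∈ Set.Ioo (0:ℝ) 1) ∨ (q z = 0 ∧ r z = 0) := by
  obtain ⟨-, -, -, T1, T01, T0, hunion, -, -, -, -, -, -, h1, h01, h0⟩ := hFR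
  have : z ∈ T1 ∪ T01 ∪ T0 := hunion ▸ hz
  rcases this with (h | h) | h
  · exact Or.inl (h1 z h)
  · exact Or.inr (Or.inl (h01 z h))
  · exact Or.inr (Or.inr (h0 z h))

lemma FR_repr {θl θh qhat c z : ℝ} {P r q u : ℝ → ℝ}
    (hqhat0 : 0 < qhat) (hqhat_eq : V P qhat - qhat * P qhat = c)
    (hFR : FloorRandomized θl θh qhat r q u) (hz : z ∈ Set.Icc θl θh) :
    r z * (V P (q z) - c - z * q z) = phi P c z qhat (q z * r z) := by
  rcases FR_mem hFR hz with ⟨hq, hr⟩ | ⟨hq, hr⟩ | ⟨hq, hr⟩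
  · rw [hr, mul_one, one_mul, phi, if_pos hq]
  · have hlt : q z * r z < qhat := by
      rw [hq]; exact mul_lt_of_lt_one_right hqhat0 hr.2
    rw [phi, if_neg (not_le.2 hlt), hq]
    have hV : V P qhat = c + qhat * P qhat := by linarith
    rw [hV]; ring
  · rw [hq, hr]; simp [phi, hqhat0.not_ge]

lemma FR_zero {θl θh qhat z qez : ℝ} {r q u : ℝ → ℝ}
    (hFR : FloorRandomized θl θh qhat r q u) (hz : z ∈ Set.Icc θl θh)
    (hqe : q z ≤ qez) (hltq : qez < qhat) : q z = 0 ∧ r z = 0 := by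
  rcases FR_mem hFR hz with ⟨hq, hr⟩ | ⟨hq, hr⟩ | h
  · linarith
  · exfalso; rw [hq] at hqe; linarith
  · exact h
theorem stmt16 (θl θh qbar c α qhat : ℝ) (P qe r q u rt qt ut : ℝ → ℝ)
    (h0 : 0 < θl) (hlt : θl < θh) (hqbar : 0 < qbar) (hc : 0 < c)
    (hα0 : 0 ≤ α) (hα1 : α < 1)
    (hPcont : ContinuousOn P (Icc 0 qbar))
    (hPanti : StrictAntiOn P (Icc 0 qbar))
    (hPqbar : P qbar = 0)
    (hqe : ∀ θ ∈ Icc θl θh, qe θ ∈ Icc 0 qbar ∧ P (qe θ) = θ)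
    (hqhat_mem : qhat ∈ Ioo 0 qbar)
    (hqhat_eq : V P qhat - qhat * P qhat = c)
    (hvalid : Valid θl θh qbar r q) (hvalid' : Valid θl θh qbar rt qt)
    (hFR : FloorRandomized θl θh qhat r q u)
    (hFR' : FloorRandomized θl θh qhat rt qt ut)
    (hLC : LeftCont θl θh r q) (hLC' : LeftCont θl θh rt qt)
    (hDD : DD θl θh qe q) (hDD' : DD θl θh qe qt)
    (hdom : Dominates θl θh P c α rt qt ut r q u) :
    ∀ θ ∈ Icc θl θh, q θ * r θ < qt θ * rt θ → ut θ < u θ := by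
  have h1α : 0 < 1 - α := by linarith
  have hqhat0 : 0 < qhat := hqhat_mem.1
  have hqhatm : qhat ∈ Icc (0:ℝ) qbar := ⟨hqhat_mem.1.le, hqhat_mem.2.le⟩
  have hPanti' : AntitoneOn P (Icc 0 qbar) := fun a ha b hb hab => by
    rcases hab.eq_or_lt with rfl | h
    · exact le_rfl
    · exact (hPanti ha hb h).le
  have hXnn : ∀ z ∈ Icc θl θh, 0 ≤ q z * r z := fun z hz =>
    mul_nonneg (hvalid.2 z hz).1 (hvalid.1 z hz).1
  have hXnn' : ∀ z ∈ Icc θl θh, 0 ≤ qt z * rt z := fun z hz =>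
    mul_nonneg (hvalid'.2 z hz).1 (hvalid'.1 z hz).1
  have hXle : ∀ z ∈ Icc θl θh, q z * r z ≤ qe z := fun z hz =>
    le_trans (mul_le_of_le_one_right (hvalid.2 z hz).1 (hvalid.1 z hz).2) (hDD.1 z hz)
  have hXle' : ∀ z ∈ Icc θl θh, qt z * rt z ≤ qe z := fun z hz =>
    le_trans (mul_le_of_le_one_right (hvalid'.2 z hz).1 (hvalid'.1 z hz).2) (hDD'.1 z hz)
  have hzsP : ∀ z ∈ Icc θl θh, ∀ s ∈ Icc (0:ℝ) (qe z), z ≤ P s := by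
    intro z hz s hs
    have h1 := (hqe z hz).1
    have h2 : P (qe z) ≤ P s := hPanti' ⟨hs.1, hs.2.trans h1.2⟩ h1 hs.2
    rw [(hqe z hz).2] at h2; exact h2
  have hdom1 : ∀ z ∈ Icc θl θh, (1 - α) * (ut z - u z) ≤
      rt z * (V P (qt z) - c - z * qt z) - r z * (V P (q z) - c - z * q z) := by
    intro z hz
    have h := hdom.1 z hz
    simp only [RS] at h; linarith
  have hqelt : ∀ z ∈ Icc θl θh, P qhat < z → qe z < qhat := by
    intro z hz hP
    by_contra h; push_neg at h
    have := hPanti' hqhatm (hqe z hz).1 h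
    rw [(hqe z hz).2] at this; linarith
  -- Key: positive rent advantage forces higher effective quantity
  have hkey : ∀ z ∈ Icc θl θh, u z < ut z → q z * r z < qt z * rt z := by
    intro z hz hu
    by_contra hcon; push_neg at hcon
    have hd := hdom1 z hz
    have hmul : 0 < (1 - α) * (ut z - u z) := mul_pos h1α (by linarith)
    by_cases hzP : z ≤ P qhat
    · have hmono := phi_mono (a := qt z * rt z) (b := q z * r z) hPcont hqhat0 hqhat_eq
        (hqe z hz).1.2 (hzsP z hz) hzP (hXnn' z hz) hcon (hXle z hz)
      rw [← FR_repr hqhat0 hqhat_eq hFR' hz, ← FR_repr hqhat0 hqhat_eq hFR hz] at hmono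
      linarith
    · push_neg at hzP
      have hqez := hqelt z hz hzP
      obtain ⟨hq0, hr0⟩ := FR_zero hFR hz (hDD.1 z hz) hqez
      obtain ⟨hq0', hr0'⟩ := FR_zero hFR' hz (hDD'.1 z hz) hqez
      rw [hr0, hr0'] at hd; simp at hd; linarith
  -- envelope
  have hu_eq : ∀ z ∈ Icc θl θh, u z = ∫ w in z..θh, q w * r w := by
    intro z hz
    rw [hFR.1.2 z hz, hFR.2.2.1]; ring
  have hut_eq : ∀ z ∈ Icc θl θh, ut z = ∫ w in z..θh, qt w * rt w := by
    intro z hz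
    rw [hFR'.1.2 z hz, hFR'.2.2.1]; ring
  -- integrability
  have hint : ∀ a b, a ∈ Icc θl θh → b ∈ Icc θl θh →
      IntervalIntegrable (fun w => q w * r w) volume a b := by
    intro a b ha hb
    apply AntitoneOn.intervalIntegrable
    apply hFR.1.1.mono
    intro w hw
    rcases le_total a b with h | h
    · rw [uIcc_of_le h] at hw; exact ⟨ha.1.trans hw.1, hw.2.trans hb.2⟩
    · rw [uIcc_of_ge h] at hw; exact ⟨hb.1.trans hw.1, hw.2.trans ha.2⟩
  have hint' : ∀ a b, a ∈ Icc θl θh → b ∈ Icc θl θh →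
      IntervalIntegrable (fun w => qt w * rt w) volume a b := by
    intro a b ha hb
    apply AntitoneOn.intervalIntegrable
    apply hFR'.1.1.mono
    intro w hw
    rcases le_total a b with h | h
    · rw [uIcc_of_le h] at hw; exact ⟨ha.1.trans hw.1, hw.2.trans hb.2⟩
    · rw [uIcc_of_ge h] at hw; exact ⟨hb.1.trans hw.1, hw.2.trans ha.2⟩
  set Fd : ℝ → ℝ := fun z => (∫ w in z..θh, qt w * rt w) - ∫ w in z..θh, q w * r w
    with hFd_def
  have hF : ∀ z ∈ Icc θl θh, Fd z = ut z - u z := by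
    intro z hz
    rw [hFd_def]; dsimp only; rw [← hu_eq z hz, ← hut_eq z hz]
  -- main monotonicity estimate for Fd
  have hFd_mono : ∀ a b ε : ℝ, θl ≤ a → a ≤ b → b ≤ θh → 0 ≤ ε →
      (∀ w ∈ Ioc a b, q w * r w + ε ≤ qt w * rt w) → Fd b + (b - a) * ε ≤ Fd a := by
    intro a b ε hθla hab hbθh hε hcomp
    have ha : a ∈ Icc θl θh := ⟨hθla, hab.trans hbθh⟩
    have hb : b ∈ Icc θl θh := ⟨hθla.trans hab, hbθh⟩
    have hθhm : θh ∈ Icc θl θh := ⟨hlt.le, le_rfl⟩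
    have s1 : (∫ w in a..b, q w * r w) + (∫ w in b..θh, q w * r w)
        = ∫ w in a..θh, q w * r w :=
      intervalIntegral.integral_add_adjacent_intervals (hint a b ha hb) (hint b θh hb hθhm)
    have s2 : (∫ w in a..b, qt w * rt w) + (∫ w in b..θh, qt w * rt w)
        = ∫ w in a..θh, qt w * rt w :=
      intervalIntegral.integral_add_adjacent_intervals (hint' a b ha hb) (hint' b θh hb hθhm)
    have m1 : (∫ w in a..b, (q w * r w + ε)) ≤ ∫ w in a..b, qt w * rt w := by
      rw [intervalIntegral.integral_of_le hab, intervalIntegral.integral_of_le hab]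
      exact setIntegral_mono_on ((hint a b ha hb).add intervalIntegrable_const).1
        (hint' a b ha hb).1 measurableSet_Ioc hcomp
    have m2 : (∫ w in a..b, (q w * r w + ε)) = (∫ w in a..b, q w * r w) + (b - a) * ε := by
      rw [intervalIntegral.integral_add (hint a b ha hb) intervalIntegrable_const,
        intervalIntegral.integral_const, smul_eq_mul]
    rw [hFd_def]; dsimp only; linarith
  clear_value Fd
  -- left continuity extraction
  have hleft : ∀ m, θl < m → m ≤ θh → q m * r m < qt m * rt m →
      ∃ ε : ℝ, 0 < ε ∧ ∃ l, θl ≤ l ∧ l < m ∧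
        ∀ s ∈ Ioc l m, q s * r s + ε ≤ qt s * rt s := by
    intro m hm1 hm2 hDm
    refine ⟨(qt m * rt m - q m * r m) / 2, by linarith, ?_⟩
    have ht := hLC m ⟨hm1, hm2⟩
    have hev : ∀ᶠ s in nhdsWithin m (Iio m),
        q s * r s < q m * r m + (qt m * rt m - q m * r m) / 2 :=
      ht.eventually_lt_const (by linarith)
    obtain ⟨l', hl', hsub⟩ := mem_nhdsLT_iff_exists_Ioo_subset.1 hev
    refine ⟨max l' θl, le_max_right _ _, max_lt hl' hm1, ?_⟩
    intro s hs
    rcases eq_or_lt_of_le hs.2 with rfl | hsm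
    · linarith
    · have h1 : q s * r s < q m * r m + (qt m * rt m - q m * r m) / 2 :=
        hsub ⟨(le_max_left _ _).trans_lt hs.1, hsm⟩
      have h2 : qt m * rt m ≤ qt s * rt s :=
        hFR'.1.1 ⟨(le_max_right _ _).trans hs.1.le, hsm.le.trans hm2⟩ ⟨hm1.le, hm2⟩ hsm.le
      linarith
  -- structure at the bottom
  have hPθl : q θl * r θl < qt θl * rt θl → P qhat = θl := by
    intro hD0
    have hθlm : θl ∈ Icc θl θh := ⟨le_rfl, hlt.le⟩
    rcases FR_mem hFR hθlm with ⟨hq1, hr1⟩ | ⟨hq01, hr01⟩ | ⟨hq0, hr0⟩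
    · exfalso
      rw [hr1, mul_one, hDD.2] at hD0
      linarith [hXle' θl hθlm]
    · have hqeθl : qe θl = qhat := by rw [← hDD.2, hq01]
      have := (hqe θl hθlm).2
      rw [hqeθl] at this; exact this
    · exfalso
      have hqe0 : qe θl = 0 := by rw [← hDD.2, hq0]
      rw [hq0, hr0] at hD0
      have := hXle' θl hθlm
      rw [hqe0] at this
      simp at hD0; linarith
  have hzero_all : P qhat = θl → ∀ z ∈ Ioc θl θh,
      (q z = 0 ∧ r z = 0) ∧ (qt z = 0 ∧ rt z = 0) := by
    intro hP z hz
    have hzm : z ∈ Icc θl θh := ⟨hz.1.le, hz.2⟩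
    have hq' : qe z < qhat := hqelt z hzm (by rw [hP]; exact hz.1)
    exact ⟨FR_zero hFR hzm (hDD.1 z hzm) hq', FR_zero hFR' hzm (hDD'.1 z hzm) hq'⟩
  have hzint : P qhat = θl → ∀ z ∈ Icc θl θh,
      (∫ w in z..θh, q w * r w) = 0 ∧ (∫ w in z..θh, qt w * rt w) = 0 := by
    intro hP z hz
    constructor
    · rw [intervalIntegral.integral_of_le hz.2]
      rw [setIntegral_congr_fun measurableSet_Ioc
        (g := fun _ => (0:ℝ)) (fun w hw => by
          obtain ⟨⟨hq', hr'⟩, -⟩ := hzero_all hP w ⟨hz.1.trans_lt hw.1, hw.2⟩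
          simp [hq', hr'])]
      simp
    · rw [intervalIntegral.integral_of_le hz.2]
      rw [setIntegral_congr_fun measurableSet_Ioc
        (g := fun _ => (0:ℝ)) (fun w hw => by
          obtain ⟨-, hq', hr'⟩ := hzero_all hP w ⟨hz.1.trans_lt hw.1, hw.2⟩
          simp [hq', hr'])]
      simp
  -- main argument
  intro θ hθ hDθ
  by_contra hcon; push_neg at hcon
  rcases eq_or_lt_of_le hθ.1 with hθl | hθgt
  · -- θ = θl : contradiction with strict dominance
    obtain ⟨θ₀, hθ₀m, hstrict⟩ := hdom.2
    have hP : P qhat = θl := hPθl (by rw [hθl]; exact hDθ)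
    have huu : u θ₀ = ut θ₀ := by
      rw [hu_eq θ₀ hθ₀m, hut_eq θ₀ hθ₀m, (hzint hP θ₀ hθ₀m).1, (hzint hP θ₀ hθ₀m).2]
    have hqeθl : qe θl = qhat := by
      apply hPanti.injOn (hqe θl ⟨le_rfl, hlt.le⟩).1 hqhatm
      rw [(hqe θl ⟨le_rfl, hlt.le⟩).2, hP]
    have hRS1 : r θ₀ * (V P (q θ₀) - c - θ₀ * q θ₀)
        = rt θ₀ * (V P (qt θ₀) - c - θ₀ * qt θ₀) := by
      rcases eq_or_lt_of_le hθ₀m.1 with h | h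
      · have key : ∀ t : ℝ, 0 ≤ t → t ≤ qhat → phi P c θ₀ qhat t = 0 := by
          intro t h0t h1t
          rw [phi]; split_ifs with hcond
          · have ht : t = qhat := le_antisymm h1t hcond
            rw [ht]
            linear_combination hqhat_eq + qhat * hP + qhat * h
          · linear_combination t * hP + t * h
        rw [FR_repr hqhat0 hqhat_eq hFR hθ₀m, FR_repr hqhat0 hqhat_eq hFR' hθ₀m]
        have hqeθ₀ : qe θ₀ = qhat := by rw [← h]; exact hqeθl
        have e1 : q θ₀ * r θ₀ ≤ qhat := hqeθ₀ ▸ hXle θ₀ hθ₀m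
        have e2 : qt θ₀ * rt θ₀ ≤ qhat := hqeθ₀ ▸ hXle' θ₀ hθ₀m
        rw [key _ (hXnn θ₀ hθ₀m) e1, key _ (hXnn' θ₀ hθ₀m) e2]
      · obtain ⟨⟨-, hr0⟩, -, hr0'⟩ := hzero_all hP θ₀ ⟨h, hθ₀m.2⟩
        rw [hr0, hr0']; ring
    simp only [RS] at hstrict
    rw [hRS1, huu] at hstrict
    exact lt_irrefl _ hstrict
  · -- θl < θ
    have hFθ : 0 ≤ Fd θ := by rw [hF θ hθ]; linarith
    set A : Set ℝ := {z | z ∈ Icc θl θ ∧ ∀ w ∈ Ioo z θ, 0 < Fd w} with hA_def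
    have hθA : θ ∈ A := ⟨⟨hθ.1, le_rfl⟩, fun w hw => absurd (hw.1.trans hw.2) (lt_irrefl θ)⟩
    have hAne : A.Nonempty := ⟨θ, hθA⟩
    have hbdd : BddBelow A := ⟨θl, fun z hz => hz.1.1⟩
    set m := sInf A with hm_def
    have hmθl : θl ≤ m := le_csInf hAne fun z hz => hz.1.1
    have hmθ : m ≤ θ := csInf_le hbdd hθA
    have hmF : ∀ w ∈ Ioo m θ, 0 < Fd w := by
      intro w hw
      obtain ⟨z, hzA, hzw⟩ := exists_lt_of_csInf_lt hAne hw.1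
      exact hzA.2 w ⟨hzw, hw.2⟩
    have hmsInf : ∀ z ∈ A, m ≤ z := fun z hz => csInf_le hbdd hz
    clear_value m
    have hmD : ∀ w ∈ Ioo m θ, q w * r w < qt w * rt w := by
      intro w hw
      have hwm : w ∈ Icc θl θh := ⟨hmθl.trans hw.1.le, hw.2.le.trans hθ.2⟩
      refine hkey w hwm ?_
      have := hF w hwm; have := hmF w hw; linarith
    have hFge : ∀ a, m ≤ a → a ≤ θ → 0 ≤ Fd a := by
      intro a ha1 ha2
      have hcomp : ∀ w ∈ Ioc a θ, q w * r w + 0 ≤ qt w * rt w := by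
        intro w hw
        rcases eq_or_lt_of_le hw.2 with rfl | hwθ
        · linarith
        · linarith [hmD w ⟨ha1.trans_lt hw.1, hwθ⟩]
      have := hFd_mono a θ 0 (hmθl.trans ha1) ha2 hθ.2 le_rfl hcomp
      linarith
    have hFgt : ∀ a, m ≤ a → a < θ → 0 < Fd a := by
      intro a ha1 ha2
      have hw1 : a < (a + θ) / 2 := by linarith
      have hw2 : (a + θ) / 2 < θ := by linarith
      have h1 : 0 < Fd ((a + θ) / 2) := hmF _ ⟨ha1.trans_lt hw1, hw2⟩
      have hcomp : ∀ w ∈ Ioc a ((a + θ) / 2), q w * r w + 0 ≤ qt w * rt w := by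
        intro w hw
        exact le_of_lt (by linarith [hmD w ⟨ha1.trans_lt hw.1, hw.2.trans_lt hw2⟩])
      have := hFd_mono a ((a + θ) / 2) 0 (hmθl.trans ha1) hw1.le
        (hw2.le.trans hθ.2) le_rfl hcomp
      linarith
    have hm_eq : m = θl := by
      by_contra hne
      have hmgt : θl < m := hmθl.lt_of_ne (Ne.symm hne)
      have h0m : 0 ≤ Fd m := hFge m le_rfl hmθ
      have hDm : q m * r m < qt m * rt m := by
        rcases eq_or_lt_of_le hmθ with h | h
        · rw [h]; exact hDθ
        · refine hkey m ⟨hmθl, hmθ.trans hθ.2⟩ ?_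
          have := hF m ⟨hmθl, hmθ.trans hθ.2⟩
          have := hFgt m le_rfl h
          linarith
      obtain ⟨ε, hε, l, hl1, hl2, hl3⟩ := hleft m hmgt (hmθ.trans hθ.2) hDm
      have hlA : l ∈ A := by
        refine ⟨⟨hl1, hl2.le.trans hmθ⟩, ?_⟩
        intro w hw
        rcases lt_trichotomy w m with hwm | hwm | hwm
        · have hcomp : ∀ s ∈ Ioc w m, q s * r s + ε ≤ qt s * rt s := fun s hs =>
            hl3 s ⟨hw.1.trans hs.1, hs.2⟩
          have := hFd_mono w m ε (hl1.trans hw.1.le) hwm.le (hmθ.trans hθ.2) hε.le hcomp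
          nlinarith
        · rw [hwm]
          exact hFgt m le_rfl (hwm ▸ hw.2)
        · exact hmF w ⟨hwm, hw.2⟩
      exact absurd (hmsInf l hlA) (not_le.2 hl2)
    -- endgame
    have hθlm : θl ∈ Icc θl θh := ⟨le_rfl, hlt.le⟩
    have hFθl : 0 < Fd θl := by
      have := hFgt m le_rfl (by rw [hm_eq]; exact hθgt)
      rwa [hm_eq] at this
    have hDθl : q θl * r θl < qt θl * rt θl := by
      refine hkey θl hθlm ?_
      have := hF θl hθlm; linarith
    have hP := hPθl hDθl
    have hz0 := hzint hP θl hθlm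
    rw [hFd_def] at hFθl; dsimp only at hFθl
    rw [hz0.1, hz0.2] at hFθl
    linarith
end

section
/- Comparative statics of rotations: let P and P_n be strictly decreasing continuous inverse demand functions on [0, q̄] such that q ↦ P(q) - P_n(q) is strictly decreasing and P_n(P⁻¹(θ̲)) = θ̲. Then (i) V_n(q) - q·P_n(q) < V(q) - q·P(q) for all q > 0, where V_n(q) = ∫₀^q P_n; (ii) the quantity floor q̂_n under P_n (solving V_n(q) - qP_n(q) = c) is strictly larger than the quantity floor q̂ under P; and (iii) P_n⁻¹(θ) ≤ P⁻¹(θ) for all θ ∈ [θ̲, θ̄], with strict inequality for θ > θ̲. -/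
open Set Filter MeasureTheory

lemma anti_lt_of_lt {s : Set ℝ} {f : ℝ → ℝ} (hf : StrictAntiOn f s)
    {a b : ℝ} (ha : a ∈ s) (hb : b ∈ s) (h : f a < f b) : b < a := by
  by_contra h'
  push_neg at h'
  rcases eq_or_lt_of_le h' with rfl | h'
  · exact lt_irrefl _ h
  · exact absurd (hf ha hb h') (not_lt.2 h.le)

lemma anti_le_of_le {s : Set ℝ} {f : ℝ → ℝ} (hf : StrictAntiOn f s)
    {a b : ℝ} (ha : a ∈ s) (hb : b ∈ s) (h : a ≤ b) : f b ≤ f a := by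
  rcases eq_or_lt_of_le h with rfl | h
  · exact le_refl _
  · exact (hf ha hb h).le

lemma integrable_sub_Icc {P : ℝ → ℝ} {qbar a b : ℝ}
    (hPcont : ContinuousOn P (Icc 0 qbar))
    (ha : a ∈ Icc 0 qbar) (hb : b ∈ Icc 0 qbar) :
    IntervalIntegrable P volume a b := by
  apply ContinuousOn.intervalIntegrable
  exact hPcont.mono (uIcc_subset_Icc ha hb)

lemma gmono {P : ℝ → ℝ} {qbar a b : ℝ}
    (hPcont : ContinuousOn P (Icc 0 qbar))
    (hPanti : StrictAntiOn P (Icc 0 qbar))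
    (ha : a ∈ Icc 0 qbar) (hb : b ∈ Icc 0 qbar) (hab : a ≤ b) :
    V P a - a * P a ≤ V P b - b * P b := by
  have h0 : (0:ℝ) ∈ Icc 0 qbar := ⟨le_refl _, le_trans ha.1 ha.2⟩
  have hint0a := integrable_sub_Icc hPcont h0 ha
  have hintab := integrable_sub_Icc hPcont ha hb
  have hsplit : V P a + ∫ z in a..b, P z = V P b :=
    intervalIntegral.integral_add_adjacent_intervals hint0a hintab
  have hmono : ∫ z in a..b, (fun _ => P b) z ≤ ∫ z in a..b, P z := by
    apply intervalIntegral.integral_mono_on hab intervalIntegrable_const hintab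
    intro x hx
    exact anti_le_of_le hPanti ⟨le_trans ha.1 hx.1, le_trans hx.2 hb.2⟩ hb (hx.2)
  rw [intervalIntegral.integral_const, smul_eq_mul] at hmono
  have hPab : P b ≤ P a := anti_le_of_le hPanti ha hb hab
  nlinarith [ha.1]

theorem stmt18 (θl θh qbar c : ℝ) (P Pn pinv pninv : ℝ → ℝ) (qhat qhatn : ℝ)
    (h0 : 0 < θl) (hlt : θl < θh) (hqbar : 0 < qbar) (hc : 0 < c)
    (hPcont : ContinuousOn P (Icc 0 qbar))
    (hPanti : StrictAntiOn P (Icc 0 qbar))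
    (hPncont : ContinuousOn Pn (Icc 0 qbar))
    (hPnanti : StrictAntiOn Pn (Icc 0 qbar))
    -- strictly decreasing difference
    (hdiff : ∀ q' q : ℝ, q' ∈ Icc 0 qbar → q ∈ Icc 0 qbar → q' < q →
        P q - Pn q < P q' - Pn q')
    -- generalized inverses of P and Pn on the type space
    (hpinv : ∀ θ ∈ Icc θl θh, pinv θ ∈ Icc 0 qbar ∧ P (pinv θ) = θ)
    (hpninv : ∀ θ ∈ Icc θl θh, pninv θ ∈ Icc 0 qbar ∧ Pn (pninv θ) = θ)
    -- P and Pn cross at the efficient quantity of the lowest type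
    (hcross : Pn (pinv θl) = θl)
    -- quantity floors under P and Pn
    (hqhat : qhat ∈ Ioo 0 qbar ∧ V P qhat - qhat * P qhat = c)
    (hqhatn : qhatn ∈ Ioo 0 qbar ∧ V Pn qhatn - qhatn * Pn qhatn = c) :
    (∀ q ∈ Ioc (0:ℝ) qbar, V Pn q - q * Pn q < V P q - q * P q) ∧
    qhat < qhatn ∧
    (∀ θ ∈ Icc θl θh, pninv θ ≤ pinv θ ∧ (θl < θ → pninv θ < pinv θ)) := by
  have h0mem : (0:ℝ) ∈ Icc 0 qbar := ⟨le_refl _, hqbar.le⟩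
  -- Part (i)
  have key : ∀ q ∈ Ioc (0:ℝ) qbar, V Pn q - q * Pn q < V P q - q * P q := by
    intro q hq
    have hqmem : q ∈ Icc 0 qbar := ⟨hq.1.le, hq.2⟩
    have hintP := integrable_sub_Icc hPcont h0mem hqmem
    have hintPn := integrable_sub_Icc hPncont h0mem hqmem
    have hpos : 0 < ∫ z in (0:ℝ)..q, (P z - Pn z - (P q - Pn q)) := by
      apply intervalIntegral.intervalIntegral_pos_of_pos_on
      · exact (hintP.sub hintPn).sub intervalIntegrable_const
      · intro x hx
        have hxmem : x ∈ Icc 0 qbar := ⟨hx.1.le, hx.2.le.trans hq.2⟩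
        have := hdiff x q hxmem hqmem hx.2
        linarith
      · exact hq.1
    have heq : ∫ z in (0:ℝ)..q, (P z - Pn z - (P q - Pn q)) =
        (V P q - V Pn q) - q * (P q - Pn q) := by
      rw [intervalIntegral.integral_sub (hintP.sub hintPn) intervalIntegrable_const,
        intervalIntegral.integral_sub hintP hintPn, intervalIntegral.integral_const]
      simp [V]
    rw [heq] at hpos
    linarith
  refine ⟨key, ?_, ?_⟩
  -- Part (ii)
  · obtain ⟨hq1, hq2⟩ := hqhat
    obtain ⟨hqn1, hqn2⟩ := hqhatn
    by_contra h
    push_neg at h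
    have hmem1 : qhatn ∈ Icc 0 qbar := ⟨hqn1.1.le, hqn1.2.le⟩
    have hmem2 : qhat ∈ Icc 0 qbar := ⟨hq1.1.le, hq1.2.le⟩
    have hmono := gmono hPncont hPnanti hmem1 hmem2 h
    have hk := key qhat ⟨hq1.1, hq1.2.le⟩
    linarith
  -- Part (iii)
  · intro θ hθ
    obtain ⟨hpm, hpe⟩ := hpinv θ hθ
    obtain ⟨hpnm, hpne⟩ := hpninv θ hθ
    obtain ⟨hplm, hple⟩ := hpinv θl ⟨le_refl _, hlt.le⟩
    have hD0 : P (pinv θl) - Pn (pinv θl) = 0 := by rw [hple, hcross]; ring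
    have hstrict : θl < θ → pninv θ < pinv θ := by
      intro hθl
      have h1 : pinv θ < pinv θl := by
        apply anti_lt_of_lt hPanti hplm hpm
        rw [hpe, hple]; exact hθl
      have hd := hdiff (pinv θ) (pinv θl) hpm hplm h1
      have h2 : Pn (pinv θ) < Pn (pninv θ) := by
        rw [hpne]; rw [hpe] at hd; linarith
      exact anti_lt_of_lt hPnanti hpm hpnm h2
    refine ⟨?_, hstrict⟩
    rcases eq_or_lt_of_le hθ.1 with heq | hθl
    · -- θ = θl : Pn (pinv θ) = θ = Pn (pninv θ), so equality by injectivity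
      have h2 : Pn (pinv θ) = Pn (pninv θ) := by
        rw [hpne, ← heq] at *
        rw [← heq] at hcross ⊢
        -- pinv θ: need Pn (pinv θ) = θ
        exact hcross
      have := hPnanti.injOn hpm hpnm h2
      exact le_of_eq this.symm
    · exact (hstrict hθl).le
end

section
/- Aggregation lemma for floor randomization: given N IC and IR mechanisms M_1, …, M_N and convex weights γ ∈ [0,1]^N with Σγ_i = 1, let q̃(θ) = Σ_i γ_i q_i(θ) r_i(θ) and let M^T be the floor-randomized transformation of q̃ (with u^T(θ) = ∫_θ^θ̄ q̃(z)dz). Then for every θ, RS_α(θ, M^T) ≥ Σ_i γ_i RS_α(θ, M_i). -/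
open Set Filter MeasureTheory

private lemma aux_per_point {K M a r q f : ℝ} (t : f ≤ K + M * (q - a)) (hr0 : 0 ≤ r)
    (hr1 : r ≤ 1) (hK0 : 0 ≤ K - M * a) : r * f ≤ K + M * (q * r - a) := by
  have h1 : r * f ≤ r * (K + M * (q - a)) := mul_le_mul_of_nonneg_left t hr0
  have h2 : 0 ≤ (1 - r) * (K - M * a) := mul_nonneg (by linarith) hK0
  nlinarith [h1, h2]

private lemma aux_integral_le (P : ℝ → ℝ) (qbar : ℝ) (hP : ContinuousOn P (Set.Icc 0 qbar))
    (hA : AntitoneOn P (Set.Icc 0 qbar)) {a x : ℝ}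
    (ha : a ∈ Set.Icc 0 qbar) (hx : x ∈ Set.Icc 0 qbar) :
    ∫ z in a..x, P z ≤ (x - a) * P a := by
  have hsub : Set.uIcc a x ⊆ Set.Icc 0 qbar := Set.uIcc_subset_Icc ha hx
  have hint : IntervalIntegrable P MeasureTheory.volume a x :=
    (hP.mono hsub).intervalIntegrable
  rcases le_total a x with h | h
  · have hle : ∀ z ∈ Set.Icc a x, P z ≤ P a := by
      intro z hz
      have hzmem : z ∈ Set.Icc 0 qbar := ⟨le_trans ha.1 hz.1, le_trans hz.2 hx.2⟩
      exact hA ha hzmem hz.1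
    have := intervalIntegral.integral_mono_on h hint intervalIntegrable_const hle
    simpa [smul_eq_mul, mul_comm] using this
  · rw [intervalIntegral.integral_symm]
    have hsub' : Set.uIcc x a ⊆ Set.Icc 0 qbar := Set.uIcc_subset_Icc hx ha
    have hint' : IntervalIntegrable P MeasureTheory.volume x a :=
      (hP.mono hsub').intervalIntegrable
    have hle : ∀ z ∈ Set.Icc x a, P a ≤ P z := by
      intro z hz
      have hzmem : z ∈ Set.Icc 0 qbar := ⟨le_trans hx.1 hz.1, le_trans hz.2 ha.2⟩
      exact hA hzmem ha hz.2
    have := intervalIntegral.integral_mono_on h intervalIntegrable_const hint' hle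
    have h2 : (a - x) * P a ≤ ∫ z in x..a, P z := by
      simpa [smul_eq_mul, mul_comm] using this
    linarith

theorem stmt19 (θl θh qbar c α qhat : ℝ) (P : ℝ → ℝ)
    (N : ℕ) (hN : 0 < N)
    (r q u : Fin N → ℝ → ℝ) (γ : Fin N → ℝ)
    (h0 : 0 < θl) (hlt : θl < θh) (hqbar : 0 < qbar) (hc : 0 < c)
    (hα0 : 0 ≤ α) (hα1 : α < 1)
    (hPcont : ContinuousOn P (Icc 0 qbar))
    (hPanti : StrictAntiOn P (Icc 0 qbar))
    (hPqbar : P qbar = 0)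
    (hqhat_mem : qhat ∈ Ioo 0 qbar)
    (hqhat_eq : V P qhat - qhat * P qhat = c)
    (hγ : ∀ i, γ i ∈ Icc (0:ℝ) 1) (hγsum : ∑ i, γ i = 1)
    (hvalid : ∀ i, Valid θl θh qbar (r i) (q i))
    (hIC : ∀ i, IC θl θh (r i) (q i) (u i))
    (hIR : ∀ i, IR θh (u i)) :
    ∀ θ ∈ Icc θl θh,
      RS P c α (rT qhat (fun z => ∑ i, γ i * (q i z * r i z)))
          (qT qhat (fun z => ∑ i, γ i * (q i z * r i z)))
          (uT θh (fun z => ∑ i, γ i * (q i z * r i z))) θ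
        ≥ ∑ i, γ i * RS P c α (r i) (q i) (u i) θ := by
  intro θ hθ
  have hAnti : AntitoneOn P (Icc 0 qbar) := hPanti.antitoneOn
  have hγ0 : ∀ i, 0 ≤ γ i := fun i => (hγ i).1
  have hq0 : (0:ℝ) < qhat := hqhat_mem.1
  -- basic bounds on the effective quantities
  have hX : ∀ i, q i θ * r i θ ∈ Icc (0:ℝ) qbar := by
    intro i
    obtain ⟨hr, hq⟩ := hvalid i
    have hr' := hr θ hθ
    have hq' := hq θ hθ
    constructor
    · exact mul_nonneg hq'.1 hr'.1
    · calc q i θ * r i θ ≤ q i θ * 1 := mul_le_mul_of_nonneg_left hr'.2 hq'.1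
        _ = q i θ := mul_one _
        _ ≤ qbar := hq'.2
  set Q : ℝ := ∑ i, γ i * (q i θ * r i θ) with hQdef
  have hQ0 : 0 ≤ Q := Finset.sum_nonneg fun i _ => mul_nonneg (hγ0 i) (hX i).1
  have hQbar : Q ≤ qbar := by
    calc Q ≤ ∑ i, γ i * qbar :=
          Finset.sum_le_sum fun i _ => mul_le_mul_of_nonneg_left (hX i).2 (hγ0 i)
      _ = qbar := by rw [← Finset.sum_mul, hγsum, one_mul]
  set a : ℝ := max Q qhat with hadef
  have haq : qhat ≤ a := le_max_right _ _
  have ha : a ∈ Icc (0:ℝ) qbar := ⟨le_trans hq0.le haq, max_le hQbar hqhat_mem.2.le⟩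
  have hqhatmem : qhat ∈ Icc (0:ℝ) qbar := ⟨hq0.le, hqhat_mem.2.le⟩
  -- V difference as an interval integral
  have hVdiff : ∀ y ∈ Icc (0:ℝ) qbar, V P y - V P a = ∫ z in a..y, P z := by
    intro y hy
    have h0mem : (0:ℝ) ∈ Icc (0:ℝ) qbar := ⟨le_refl _, hqbar.le⟩
    have h1 : IntervalIntegrable P volume 0 a :=
      (hPcont.mono (Set.uIcc_subset_Icc h0mem ha)).intervalIntegrable
    have h2 : IntervalIntegrable P volume a y :=
      (hPcont.mono (Set.uIcc_subset_Icc ha hy)).intervalIntegrable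
    have := intervalIntegral.integral_add_adjacent_intervals h1 h2
    simp only [V]
    linarith [this]
  -- tangent line inequality at a
  have htang : ∀ y ∈ Icc (0:ℝ) qbar,
      V P y - c - θ * y ≤ (V P a - c - θ * a) + (P a - θ) * (y - a) := by
    intro y hy
    have h := aux_integral_le P qbar hPcont hAnti ha hy
    have hV := hVdiff y hy
    have hexp : (P a - θ) * (y - a) = (y - a) * P a - θ * (y - a) := by ring
    linarith
  -- the intercept of the tangent line is nonnegative
  have hK0 : 0 ≤ (V P a - c - θ * a) - (P a - θ) * a := by
    have h := aux_integral_le P qbar hPcont hAnti ha hqhatmem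
    have hV := hVdiff qhat hqhatmem
    have hPa : P a ≤ P qhat := hAnti hqhatmem ha haq
    have h2 : qhat * P a ≤ qhat * P qhat := mul_le_mul_of_nonneg_left hPa hq0.le
    have hexp : (qhat - a) * P a = qhat * P a - a * P a := by ring
    have hexp2 : (P a - θ) * a = a * P a - θ * a := by ring
    linarith [hqhat_eq]
  -- per-mechanism bound and its aggregation
  have hsumle : ∑ i, γ i * (r i θ * (V P (q i θ) - c - θ * q i θ))
      ≤ (V P a - c - θ * a) + (P a - θ) * (Q - a) := by
    have hterm : ∀ i ∈ Finset.univ,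
        γ i * (r i θ * (V P (q i θ) - c - θ * q i θ))
        ≤ γ i * ((V P a - c - θ * a) + (P a - θ) * (q i θ * r i θ - a)) := by
      intro i _
      refine mul_le_mul_of_nonneg_left ?_ (hγ0 i)
      have hq' := (hvalid i).2 θ hθ
      have hr' := (hvalid i).1 θ hθ
      exact aux_per_point (htang (q i θ) hq') hr'.1 hr'.2 hK0
    calc ∑ i, γ i * (r i θ * (V P (q i θ) - c - θ * q i θ))
        ≤ ∑ i, γ i * ((V P a - c - θ * a) + (P a - θ) * (q i θ * r i θ - a)) :=
          Finset.sum_le_sum hterm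
      _ = ∑ i, (((V P a - c - θ * a) - (P a - θ) * a) * γ i
            + (P a - θ) * (γ i * (q i θ * r i θ))) := by
          refine Finset.sum_congr rfl fun i _ => by ring
      _ = ((V P a - c - θ * a) - (P a - θ) * a) * (∑ i, γ i)
            + (P a - θ) * Q := by
          rw [Finset.sum_add_distrib, ← Finset.mul_sum, ← Finset.mul_sum, hQdef]
      _ = (V P a - c - θ * a) + (P a - θ) * (Q - a) := by
          rw [hγsum]; ring
  -- the quantity part of the transformed mechanism equals the tangent value at Q
  have hfqhat : V P qhat - c - θ * qhat = qhat * (P qhat - θ) := by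
    have : qhat * (P qhat - θ) = qhat * P qhat - θ * qhat := by ring
    linarith [hqhat_eq]
  have hkey4 : rT qhat (fun z => ∑ i, γ i * (q i z * r i z)) θ
      * (V P (qT qhat (fun z => ∑ i, γ i * (q i z * r i z)) θ) - c
        - θ * qT qhat (fun z => ∑ i, γ i * (q i z * r i z)) θ)
      = (V P a - c - θ * a) + (P a - θ) * (Q - a) := by
    simp only [rT, qT, ← hQdef]
    by_cases hpos : 0 < Q
    · simp only [if_pos hpos]
      by_cases hge : qhat ≤ Q
      · have hmax : max Q qhat = Q := max_eq_left hge
        have hmin : min (Q / qhat) 1 = 1 := by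
          refine min_eq_right ?_
          rw [le_div_iff₀ hq0, one_mul]
          exact hge
        have haQ : a = Q := max_eq_left hge
        rw [hmax, hmin, haQ]
        ring
      · push_neg at hge
        have hmax : max Q qhat = qhat := max_eq_right hge.le
        have hmin : min (Q / qhat) 1 = Q / qhat := by
          refine min_eq_left ?_
          rw [div_le_one hq0]
          exact hge.le
        have haQ : a = qhat := max_eq_right hge.le
        rw [hmax, hmin, haQ, hfqhat]
        field_simp
        ring
    · have hQz : Q = 0 := le_antisymm (not_lt.mp hpos) hQ0
      simp only [if_neg hpos]
      have haQ : a = qhat := by rw [hadef, hQz]; exact max_eq_right hq0.le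
      rw [haQ, hQz, hfqhat]
      ring
  -- rent comparison
  have hsubθ : Set.uIcc θ θh ⊆ Icc θl θh := by
    rw [Set.uIcc_of_le hθ.2]
    exact Set.Icc_subset_Icc hθ.1 le_rfl
  have hint_i : ∀ i, IntervalIntegrable (fun z => q i z * r i z) volume θ θh :=
    fun i => ((hIC i).1.mono hsubθ).intervalIntegrable
  have hkey5 : uT θh (fun z => ∑ i, γ i * (q i z * r i z)) θ ≤ ∑ i, γ i * u i θ := by
    have h1 : uT θh (fun z => ∑ i, γ i * (q i z * r i z)) θ
        = ∑ i, γ i * ∫ z in θ..θh, q i z * r i z := by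
      simp only [uT]
      rw [intervalIntegral.integral_finset_sum
        (fun i _ => ((hint_i i).const_mul (γ i)))]
      exact Finset.sum_congr rfl fun i _ => intervalIntegral.integral_const_mul _ _
    have h2 : ∀ i, ∫ z in θ..θh, q i z * r i z = u i θ - u i θh := by
      intro i
      have := (hIC i).2 θ hθ
      linarith
    rw [h1]
    refine Finset.sum_le_sum fun i _ => ?_
    rw [h2 i]
    have := hIR i
    refine mul_le_mul_of_nonneg_left ?_ (hγ0 i)
    simp only [IR] at this
    linarith
  -- assemble
  simp only [RS, ge_iff_le]
  have hRHS : ∑ i, γ i * (r i θ * (V P (q i θ) - c - θ * q i θ) - (1 - α) * u i θ)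
      = (∑ i, γ i * (r i θ * (V P (q i θ) - c - θ * q i θ)))
        - (1 - α) * ∑ i, γ i * u i θ := by
    rw [Finset.mul_sum, ← Finset.sum_sub_distrib]
    exact Finset.sum_congr rfl fun i _ => by ring
  rw [hRHS, hkey4]
  have h1α : (0:ℝ) ≤ 1 - α := by linarith
  have := mul_le_mul_of_nonneg_left hkey5 h1α
  linarith [hsumle]
end
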